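/- arXiv:2011.11371 — 5 statements merged into one kernel-verified Lean document; each statement's English description precedes it below -/
import Mathlib

section
/- Under the same hypotheses as the factorial derivative bound for the autonomous ODE y' = f(y) (f is β-times differentiable, all derivatives of order ≤ β bounded by 1 in absolute value, f^(β) is 1-Lipschitz), the (β+1)-th derivative of the solution y satisfies the Lipschitz bound |y^(β+1)(x) - y^(β+1)(x')| ≤ (β+1)! · |x - x'| for all x, x' ∈ [x₀ - α, x₀ + α] with α = min(a,b). -/
open Set Finset

noncomputable def odeG (f : ℝ → ℝ) (I : Set ℝ) : ℕ → ℝ → ℝ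
  | 0 => f
  | (k+1) => fun z => derivWithin (odeG f I k) I z * f z

lemma lip_of_bound {g : ℝ → ℝ} {I : Set ℝ} (hI : UniqueDiffOn ℝ I) (hIc : Convex ℝ I)
    {m j : ℕ} {C : ℝ} (hg : ContDiffOn ℝ (m : ℕ∞) g I) (hj : j < m)
    (hb : ∀ z ∈ I, |iteratedDerivWithin (j+1) g I z| ≤ C) :
    ∀ z ∈ I, ∀ z' ∈ I,
      |iteratedDerivWithin j g I z - iteratedDerivWithin j g I z'| ≤ C * |z - z'| := by
  intro z hz z' hz'
  have hdiff : DifferentiableOn ℝ (iteratedDerivWithin j g I) I :=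
    hg.differentiableOn_iteratedDerivWithin (by exact_mod_cast hj) hI
  have hbound : ∀ w ∈ I, ‖derivWithin (iteratedDerivWithin j g I) I w‖ ≤ C := by
    intro w hw
    rw [Real.norm_eq_abs, ← iteratedDerivWithin_succ]
    exact hb w hw
  have := hIc.norm_image_sub_le_of_norm_derivWithin_le hdiff hbound hz' hz
  simpa [Real.norm_eq_abs] using this

lemma pascal_aux (U V : ℕ → ℝ) (n : ℕ) :
    ∑ i ∈ Finset.range (n+1), (n.choose i : ℝ) * (U (i+1) * V (n-i) + U i * V (n-i+1))
  = ∑ i ∈ Finset.range (n+2), ((n+1).choose i : ℝ) * (U i * V (n+1-i)) := by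
  have h1 : ∀ i ∈ Finset.range (n+1),
      (n.choose i : ℝ) * (U (i+1) * V (n-i) + U i * V (n-i+1))
      = (n.choose i : ℝ) * (U (i+1) * V (n-i)) + (n.choose i : ℝ) * (U i * V (n-i+1)) := by
    intro i _; ring
  rw [Finset.sum_congr rfl h1, Finset.sum_add_distrib]
  rw [show n + 2 = (n+1) + 1 from rfl, Finset.sum_range_succ' _ (n+1)]
  have h2 : ∀ i ∈ Finset.range (n+1),
      (((n+1).choose (i+1) : ℝ)) * (U (i+1) * V (n+1-(i+1)))
      = (n.choose i : ℝ) * (U (i+1) * V (n-i)) + (n.choose (i+1) : ℝ) * (U (i+1) * V (n-i)) := by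
    intro i hi
    have hni : n + 1 - (i+1) = n - i := by omega
    rw [hni, Nat.choose_succ_succ]
    push_cast; ring
  rw [Finset.sum_congr rfl h2, Finset.sum_add_distrib]
  have h3 : ∑ i ∈ Finset.range (n+1), (n.choose i : ℝ) * (U i * V (n-i+1))
      = (∑ i ∈ Finset.range (n+1), (n.choose (i+1) : ℝ) * (U (i+1) * V (n-i)))
        + ((n+1).choose 0 : ℝ) * (U 0 * V (n+1-0)) := by
    rw [Finset.sum_range_succ' _ n, Finset.sum_range_succ]
    have h4 : ∀ i ∈ Finset.range n,
        (n.choose (i+1) : ℝ) * (U (i+1) * V (n-(i+1)+1))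
        = (n.choose (i+1) : ℝ) * (U (i+1) * V (n-i)) := by
      intro i hi
      simp only [Finset.mem_range] at hi
      have : n - (i+1) + 1 = n - i := by omega
      rw [this]
    rw [Finset.sum_congr rfl h4]
    simp [Nat.choose_succ_self]
  rw [h3]; ring

lemma leibniz_iDW {s : Set ℝ} (hs : UniqueDiffOn ℝ s) (u v : ℝ → ℝ) :
    ∀ n : ℕ, ContDiffOn ℝ (n : ℕ∞) u s → ContDiffOn ℝ (n : ℕ∞) v s → ∀ x ∈ s,
    iteratedDerivWithin n (fun z => u z * v z) s x =
      ∑ i ∈ Finset.range (n+1), (n.choose i : ℝ) *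
        (iteratedDerivWithin i u s x * iteratedDerivWithin (n-i) v s x) := by
  intro n
  induction n with
  | zero => intro _ _ x hx; simp [iteratedDerivWithin_zero]
  | succ n ih =>
    intro hu hv x hx
    have hle : ((n : ℕ∞) : WithTop ℕ∞) ≤ (((n+1 : ℕ) : ℕ∞) : WithTop ℕ∞) := by
      exact_mod_cast Nat.le_succ n
    have heq : Set.EqOn (iteratedDerivWithin n (fun z => u z * v z) s)
        (fun z => ∑ i ∈ Finset.range (n+1), (n.choose i : ℝ) *
          (iteratedDerivWithin i u s z * iteratedDerivWithin (n-i) v s z)) s := by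
      intro z hz
      exact ih (hu.of_le hle) (hv.of_le hle) z hz
    rw [iteratedDerivWithin_succ, derivWithin_congr heq (heq hx)]
    have hA : ∀ i, i ≤ n → HasDerivWithinAt (iteratedDerivWithin i u s)
        (iteratedDerivWithin (i+1) u s x) s x := by
      intro i hi
      have hd : DifferentiableWithinAt ℝ (iteratedDerivWithin i u s) s x :=
        (hu.differentiableOn_iteratedDerivWithin
          (by exact_mod_cast Nat.lt_succ_of_le hi) hs) x hx
      have h' := hd.hasDerivWithinAt
      rwa [← iteratedDerivWithin_succ] at h'
    have hB : ∀ i, i ≤ n → HasDerivWithinAt (iteratedDerivWithin i v s)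
        (iteratedDerivWithin (i+1) v s x) s x := by
      intro i hi
      have hd : DifferentiableWithinAt ℝ (iteratedDerivWithin i v s) s x :=
        (hv.differentiableOn_iteratedDerivWithin
          (by exact_mod_cast Nat.lt_succ_of_le hi) hs) x hx
      have h' := hd.hasDerivWithinAt
      rwa [← iteratedDerivWithin_succ] at h'
    have hsum : HasDerivWithinAt
        (fun z => ∑ i ∈ Finset.range (n+1), (n.choose i : ℝ) *
          (iteratedDerivWithin i u s z * iteratedDerivWithin (n-i) v s z))
        (∑ i ∈ Finset.range (n+1), (n.choose i : ℝ) *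
          (iteratedDerivWithin (i+1) u s x * iteratedDerivWithin (n-i) v s x
            + iteratedDerivWithin i u s x * iteratedDerivWithin (n-i+1) v s x)) s x := by
      apply HasDerivWithinAt.fun_sum
      intro i hi
      simp only [Finset.mem_range, Nat.lt_succ_iff] at hi
      exact ((hA i hi).mul (hB (n-i) (Nat.sub_le n i))).const_mul _
    rw [hsum.derivWithin (hs x hx)]
    exact pascal_aux (fun i => iteratedDerivWithin i u s x)
      (fun i => iteratedDerivWithin i v s x) n

lemma sum_choose_pow (k j : ℕ) :
    ∑ i ∈ Finset.range (j+1), (j.choose i : ℝ) * ((k:ℝ)+1)^i = ((k:ℝ)+2)^j := by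
  have h := add_pow ((k:ℝ)+1) 1 j
  rw [show ((k:ℝ)+1+1) = (k:ℝ)+2 by ring] at h
  rw [h]
  apply Finset.sum_congr rfl
  intro i _
  rw [one_pow]; ring

lemma odeG_props {f : ℝ → ℝ} {I : Set ℝ} (hI : UniqueDiffOn ℝ I) (hIc : Convex ℝ I) {β : ℕ}
    (hf : ContDiffOn ℝ (β : ℕ∞) f I)
    (hbd : ∀ k ≤ β, ∀ z ∈ I, |iteratedDerivWithin k f I z| ≤ 1)
    (hlip : ∀ z ∈ I, ∀ z' ∈ I,
      |iteratedDerivWithin β f I z - iteratedDerivWithin β f I z'| ≤ |z - z'|) :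
    ∀ k, k ≤ β → ContDiffOn ℝ (((β - k : ℕ) : ℕ∞)) (odeG f I k) I ∧
      (∀ j, j + k ≤ β → ∀ z ∈ I, |iteratedDerivWithin j (odeG f I k) I z|
        ≤ (k.factorial : ℝ) * ((k:ℝ)+1)^j) ∧
      (∀ j, j + k ≤ β → ∀ z ∈ I, ∀ z' ∈ I,
        |iteratedDerivWithin j (odeG f I k) I z - iteratedDerivWithin j (odeG f I k) I z'|
          ≤ (k.factorial : ℝ) * ((k:ℝ)+1)^(j+1) * |z - z'|) := by
  -- first: f's iterated derivatives are all 1-Lipschitz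
  have hflip : ∀ j, j ≤ β → ∀ z ∈ I, ∀ z' ∈ I,
      |iteratedDerivWithin j f I z - iteratedDerivWithin j f I z'| ≤ 1 * |z - z'| := by
    intro j hj z hz z' hz'
    rcases eq_or_lt_of_le hj with rfl | hjlt
    · rw [one_mul]; exact hlip z hz z' hz'
    · exact lip_of_bound hI hIc hf hjlt
        (fun w hw => hbd (j+1) (by omega) w hw) z hz z' hz'
  intro k
  induction k with
  | zero =>
    intro _
    refine ⟨by simpa [odeG] using hf, ?_, ?_⟩
    · intro j hj z hz
      simpa [odeG] using hbd j (by omega) z hz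
    · intro j hj z hz z' hz'
      have := hflip j (by omega) z hz z' hz'
      simpa [odeG] using this
  | succ k ih =>
    intro hk1
    have hk : k ≤ β := by omega
    obtain ⟨hsm, hbnd, hlp⟩ := ih hk
    -- smoothness of odeG (k+1)
    have hd : ContDiffOn ℝ (((β - (k+1) : ℕ) : ℕ∞)) (derivWithin (odeG f I k) I) I := by
      apply hsm.derivWithin hI
      have : (β - (k+1) : ℕ) + 1 = (β - k : ℕ) := by omega
      exact_mod_cast this.le
    have hfk : ContDiffOn ℝ (((β - (k+1) : ℕ) : ℕ∞)) f I :=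
      hf.of_le (by exact_mod_cast Nat.sub_le β (k+1))
    have hsm' : ContDiffOn ℝ (((β - (k+1) : ℕ) : ℕ∞)) (odeG f I (k+1)) I := by
      show ContDiffOn ℝ _ (fun z => derivWithin (odeG f I k) I z * f z) I
      exact hd.mul hfk
    -- representation by Leibniz
    have hrep : ∀ j, j + (k+1) ≤ β → ∀ z ∈ I,
        iteratedDerivWithin j (odeG f I (k+1)) I z =
        ∑ i ∈ Finset.range (j+1), (j.choose i : ℝ) *
          (iteratedDerivWithin (i+1) (odeG f I k) I z * iteratedDerivWithin (j-i) f I z) := by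
      intro j hj z hz
      have h1 : iteratedDerivWithin j (odeG f I (k+1)) I z =
          ∑ i ∈ Finset.range (j+1), (j.choose i : ℝ) *
            (iteratedDerivWithin i (derivWithin (odeG f I k) I) I z
              * iteratedDerivWithin (j-i) f I z) := by
        have := leibniz_iDW hI (derivWithin (odeG f I k) I) f j
          (hd.of_le (by exact_mod_cast by omega : ((j:ℕ∞) : WithTop ℕ∞) ≤ _))
          (hf.of_le (by exact_mod_cast by omega : ((j:ℕ∞) : WithTop ℕ∞) ≤ _)) z hz
        exact this
      rw [h1]
      apply Finset.sum_congr rfl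
      intro i _
      rw [iteratedDerivWithin_succ']
    refine ⟨hsm', ?_, ?_⟩
    · -- bound
      intro j hj z hz
      rw [hrep j hj z hz]
      calc |∑ i ∈ Finset.range (j+1), (j.choose i : ℝ) *
            (iteratedDerivWithin (i+1) (odeG f I k) I z * iteratedDerivWithin (j-i) f I z)|
          ≤ ∑ i ∈ Finset.range (j+1), (j.choose i : ℝ) *
            ((k.factorial : ℝ) * ((k:ℝ)+1)^(i+1)) := by
            refine (Finset.abs_sum_le_sum_abs _ _).trans (Finset.sum_le_sum ?_)
            intro i hi
            simp only [Finset.mem_range, Nat.lt_succ_iff] at hi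
            rw [abs_mul, abs_mul, Nat.abs_cast]
            have h1 : |iteratedDerivWithin (i+1) (odeG f I k) I z|
                ≤ (k.factorial : ℝ) * ((k:ℝ)+1)^(i+1) := hbnd (i+1) (by omega) z hz
            have h2 : |iteratedDerivWithin (j-i) f I z| ≤ 1 := hbd (j-i) (by omega) z hz
            calc (j.choose i : ℝ) * (|iteratedDerivWithin (i+1) (odeG f I k) I z|
                  * |iteratedDerivWithin (j-i) f I z|)
                ≤ (j.choose i : ℝ) * (((k.factorial : ℝ) * ((k:ℝ)+1)^(i+1)) * 1) := by
                  apply mul_le_mul_of_nonneg_left _ (by positivity)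
                  exact mul_le_mul h1 h2 (abs_nonneg _) (by positivity)
              _ = (j.choose i : ℝ) * ((k.factorial : ℝ) * ((k:ℝ)+1)^(i+1)) := by ring
        _ = (k.factorial : ℝ) * ((k:ℝ)+1) * (((k:ℝ)+2)^j) := by
            rw [← sum_choose_pow k j, Finset.mul_sum]
            apply Finset.sum_congr rfl
            intro i _
            rw [pow_succ]; ring
        _ ≤ ((k+1).factorial : ℝ) * (((k:ℝ)+1)+1)^j := by
            rw [Nat.factorial_succ]
            push_cast
            have : ((k:ℝ)+2) = ((k:ℝ)+1)+1 := by ring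
            rw [← this]
            nlinarith [pow_nonneg (by positivity : (0:ℝ) ≤ (k:ℝ)+2) j,
              (by exact_mod_cast k.factorial_pos : (1:ℝ) ≤ (k.factorial:ℝ))]
        _ = ((k+1).factorial : ℝ) * (((k+1:ℕ):ℝ)+1)^j := by push_cast; ring
    · -- Lipschitz
      intro j hj z hz z' hz'
      rw [hrep j hj z hz, hrep j hj z' hz', ← Finset.sum_sub_distrib]
      calc |∑ i ∈ Finset.range (j+1), ((j.choose i : ℝ) *
            (iteratedDerivWithin (i+1) (odeG f I k) I z * iteratedDerivWithin (j-i) f I z)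
            - (j.choose i : ℝ) *
            (iteratedDerivWithin (i+1) (odeG f I k) I z' * iteratedDerivWithin (j-i) f I z'))|
          ≤ ∑ i ∈ Finset.range (j+1), (j.choose i : ℝ) *
            (((k.factorial : ℝ) * ((k:ℝ)+1)^(i+2) + (k.factorial : ℝ) * ((k:ℝ)+1)^(i+1))
              * |z - z'|) := by
            refine (Finset.abs_sum_le_sum_abs _ _).trans (Finset.sum_le_sum ?_)
            intro i hi
            simp only [Finset.mem_range, Nat.lt_succ_iff] at hi
            set A := iteratedDerivWithin (i+1) (odeG f I k) I z
            set A' := iteratedDerivWithin (i+1) (odeG f I k) I z'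
            set B := iteratedDerivWithin (j-i) f I z
            set B' := iteratedDerivWithin (j-i) f I z'
            have hAB : (j.choose i : ℝ) * (A * B) - (j.choose i : ℝ) * (A' * B')
                = (j.choose i : ℝ) * ((A - A') * B + A' * (B - B')) := by ring
            rw [hAB, abs_mul, Nat.abs_cast]
            have hlipA : |A - A'| ≤ (k.factorial : ℝ) * ((k:ℝ)+1)^(i+2) * |z - z'| :=
              hlp (i+1) (by omega) z hz z' hz'
            have hA'bd : |A'| ≤ (k.factorial : ℝ) * ((k:ℝ)+1)^(i+1) :=
              hbnd (i+1) (by omega) z' hz'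
            have hBbd : |B| ≤ 1 := hbd (j-i) (by omega) z hz
            have hlipB : |B - B'| ≤ 1 * |z - z'| := hflip (j-i) (by omega) z hz z' hz'
            apply mul_le_mul_of_nonneg_left _ (by positivity)
            calc |(A - A') * B + A' * (B - B')|
                ≤ |A - A'| * |B| + |A'| * |B - B'| := by
                  refine (abs_add_le _ _).trans ?_
                  rw [abs_mul, abs_mul]
              _ ≤ ((k.factorial : ℝ) * ((k:ℝ)+1)^(i+2) * |z - z'|) * 1
                  + ((k.factorial : ℝ) * ((k:ℝ)+1)^(i+1)) * (1 * |z - z'|) := by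
                  apply add_le_add
                  · exact mul_le_mul hlipA hBbd (abs_nonneg _) (by positivity)
                  · exact mul_le_mul hA'bd hlipB (abs_nonneg _) (by positivity)
              _ = ((k.factorial : ℝ) * ((k:ℝ)+1)^(i+2)
                    + (k.factorial : ℝ) * ((k:ℝ)+1)^(i+1)) * |z - z'| := by ring
        _ = (k.factorial : ℝ) * ((k:ℝ)+1) * ((k:ℝ)+2)^(j+1) * |z - z'| := by
            have hterm : ∀ i ∈ Finset.range (j+1), (j.choose i : ℝ) *
                (((k.factorial : ℝ) * ((k:ℝ)+1)^(i+2) + (k.factorial : ℝ) * ((k:ℝ)+1)^(i+1))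
                  * |z - z'|)
                = ((j.choose i : ℝ) * ((k.factorial : ℝ) * ((k:ℝ)+1)^(i+2)
                    + (k.factorial : ℝ) * ((k:ℝ)+1)^(i+1))) * |z - z'| := by
              intro i _; ring
            rw [Finset.sum_congr rfl hterm, ← Finset.sum_mul]
            congr 1
            have : ∑ i ∈ Finset.range (j+1), (j.choose i : ℝ) *
                ((k.factorial : ℝ) * ((k:ℝ)+1)^(i+2) + (k.factorial : ℝ) * ((k:ℝ)+1)^(i+1))
                = (k.factorial : ℝ) * ((k:ℝ)+1) * ((k:ℝ)+2)
                  * ∑ i ∈ Finset.range (j+1), (j.choose i : ℝ) * ((k:ℝ)+1)^i := by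
              rw [Finset.mul_sum]
              apply Finset.sum_congr rfl
              intro i _
              rw [pow_succ, pow_succ]; ring
            rw [this, sum_choose_pow k j, pow_succ]; ring
        _ ≤ ((k+1).factorial : ℝ) * (((k+1:ℕ):ℝ)+1)^(j+1) * |z - z'| := by
            rw [Nat.factorial_succ]
            push_cast
            have h2 : ((k:ℝ)+1+1) = (k:ℝ)+2 := by ring
            rw [h2]
            nlinarith [pow_nonneg (by positivity : (0:ℝ) ≤ (k:ℝ)+2) (j+1),
              (by exact_mod_cast k.factorial_pos : (1:ℝ) ≤ (k.factorial:ℝ)), abs_nonneg (z - z'),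
              mul_nonneg (pow_nonneg (by positivity : (0:ℝ) ≤ (k:ℝ)+2) (j+1)) (abs_nonneg (z-z'))]

theorem autonomous_top_derivative_lipschitz
    (β : ℕ) (f y : ℝ → ℝ) (x₀ y₀ a b : ℝ) (ha : 0 < a) (hb : 0 < b)
    (hf : ContDiffOn ℝ (β : ℕ∞) f (Icc (y₀ - b) (y₀ + b)))
    (hbd : ∀ k ≤ β, ∀ z ∈ Icc (y₀ - b) (y₀ + b),
      |iteratedDerivWithin k f (Icc (y₀ - b) (y₀ + b)) z| ≤ 1)
    (hlip : ∀ z ∈ Icc (y₀ - b) (y₀ + b), ∀ z' ∈ Icc (y₀ - b) (y₀ + b),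
      |iteratedDerivWithin β f (Icc (y₀ - b) (y₀ + b)) z -
        iteratedDerivWithin β f (Icc (y₀ - b) (y₀ + b)) z'| ≤ |z - z'|)
    (hy0 : y x₀ = y₀)
    (hode : ∀ x ∈ Icc (x₀ - a) (x₀ + a), HasDerivAt y (f (y x)) x)
    (htraj : ∀ x ∈ Icc (x₀ - a) (x₀ + a), y x ∈ Icc (y₀ - b) (y₀ + b)) :
    ∀ x ∈ Icc (x₀ - min a b) (x₀ + min a b), ∀ x' ∈ Icc (x₀ - min a b) (x₀ + min a b),
      |iteratedDerivWithin (β + 1) y (Icc (x₀ - a) (x₀ + a)) x -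
        iteratedDerivWithin (β + 1) y (Icc (x₀ - a) (x₀ + a)) x'| ≤
      (β + 1).factorial * |x - x'| := by
  have hIu : UniqueDiffOn ℝ (Icc (y₀ - b) (y₀ + b)) := uniqueDiffOn_Icc (by linarith)
  have hJu : UniqueDiffOn ℝ (Icc (x₀ - a) (x₀ + a)) := uniqueDiffOn_Icc (by linarith)
  have props := odeG_props hIu (convex_Icc _ _) hf hbd hlip
  have hcomp : ∀ k, k ≤ β → ∀ x ∈ Icc (x₀ - a) (x₀ + a),
      iteratedDerivWithin (k+1) y (Icc (x₀ - a) (x₀ + a)) x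
        = odeG f (Icc (y₀ - b) (y₀ + b)) k (y x) := by
    intro k
    induction k with
    | zero =>
      intro _ x hx
      rw [iteratedDerivWithin_one]
      have := ((hode x hx).hasDerivWithinAt).derivWithin (hJu x hx)
      rw [this]
      simp [odeG]
    | succ k ih =>
      intro hk1 x hx
      have hk : k ≤ β := by omega
      have heq : Set.EqOn (iteratedDerivWithin (k+1) y (Icc (x₀ - a) (x₀ + a)))
          (fun z => odeG f (Icc (y₀ - b) (y₀ + b)) k (y z)) (Icc (x₀ - a) (x₀ + a)) :=
        fun z hz => ih hk z hz
      rw [iteratedDerivWithin_succ, derivWithin_congr heq (heq hx)]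
      have hdG : DifferentiableWithinAt ℝ (odeG f (Icc (y₀ - b) (y₀ + b)) k)
          (Icc (y₀ - b) (y₀ + b)) (y x) := by
        have hsm := (props k hk).1
        have h1 : (1 : WithTop ℕ∞) ≤ (((β - k : ℕ) : ℕ∞) : WithTop ℕ∞) := by
          exact_mod_cast (by omega : 1 ≤ β - k)
        exact (hsm.differentiableOn (by intro h0; rw [h0] at h1; exact absurd h1 (by simp))) (y x) (htraj x hx)
      have hcd : HasDerivWithinAt (fun z => odeG f (Icc (y₀ - b) (y₀ + b)) k (y z))
          (derivWithin (odeG f (Icc (y₀ - b) (y₀ + b)) k) (Icc (y₀ - b) (y₀ + b)) (y x)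
            * f (y x)) (Icc (x₀ - a) (x₀ + a)) x :=
        (hdG.hasDerivWithinAt).comp x ((hode x hx).hasDerivWithinAt) (fun z hz => htraj z hz)
      rw [hcd.derivWithin (hJu x hx)]
      simp [odeG]
  have hsubJ : Icc (x₀ - min a b) (x₀ + min a b) ⊆ Icc (x₀ - a) (x₀ + a) :=
    Icc_subset_Icc (by have := min_le_left a b; linarith) (by have := min_le_left a b; linarith)
  intro x hx x' hx'
  have hxJ := hsubJ hx
  have hx'J := hsubJ hx'
  rw [hcomp β le_rfl x hxJ, hcomp β le_rfl x' hx'J]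
  have hylip : |y x - y x'| ≤ 1 * |x - x'| := by
    have := (convex_Icc (x₀ - a) (x₀ + a)).norm_image_sub_le_of_norm_hasDerivWithin_le
      (f' := fun z => f (y z)) (fun z hz => (hode z hz).hasDerivWithinAt)
      (fun z hz => by
        rw [Real.norm_eq_abs]
        have h0 := hbd 0 (Nat.zero_le β) (y z) (htraj z hz)
        rwa [iteratedDerivWithin_zero] at h0) hx'J hxJ
    simpa [Real.norm_eq_abs] using this
  have hlipG := (props β le_rfl).2.2 0 (by omega) (y x) (htraj x hxJ) (y x') (htraj x' hx'J)
  refine hlipG.trans ?_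
  have hfact : ((β + 1).factorial : ℝ) = (β.factorial : ℝ) * ((β:ℝ) + 1) := by
    rw [Nat.factorial_succ]; push_cast; ring
  rw [hfact]
  have h1 : (β.factorial : ℝ) * ((β:ℝ)+1)^(0+1) = (β.factorial : ℝ) * ((β:ℝ)+1) := by
    norm_num
  rw [h1]
  have hc : (0:ℝ) ≤ (β.factorial : ℝ) * ((β:ℝ)+1) := by positivity
  calc (β.factorial : ℝ) * ((β:ℝ)+1) * |y x - y x'|
      ≤ (β.factorial : ℝ) * ((β:ℝ)+1) * (1 * |x - x'|) := by
        exact mul_le_mul_of_nonneg_left hylip hc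
    _ = (β.factorial : ℝ) * ((β:ℝ)+1) * |x - x'| := by ring
end

section
/- Let f : ℝ² → ℝ be continuous on Υ = [x₀-a, x₀+a] × [y₀-b, y₀+b], with all partial derivatives D^p f of total order [p] ≤ β existing and satisfying |D^p f(x,y)| ≤ 1 on Υ, and for all p with [p] = β, |D^p f(x,y) - D^p f(x',ỹ)| ≤ max(|x-x'|, |y-ỹ|). If y solves y'(x) = f(x, y(x)) with y(x₀) = y₀ and the trajectory remains in Υ, then for all x ∈ [x₀-α, x₀+α] with α = min(a,b) and all 1 ≤ k ≤ β+1, we have |y^(k)(x)| ≤ 2^{k-1}(k-1)!. -/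
open Set

/-- The mixed partial derivative `∂^{p₁}_x ∂^{p₂}_y f` of a bivariate function. -/
noncomputable def Dp (f : ℝ → ℝ → ℝ) (p₁ p₂ : ℕ) (x z : ℝ) : ℝ :=
  iteratedDeriv p₁ (fun u => iteratedDeriv p₂ (f u) z) x

namespace FactBound

noncomputable def D1 (F : ℝ × ℝ → ℝ) : ℝ × ℝ → ℝ := fun p => fderiv ℝ F p (1, 0)
noncomputable def D2 (F : ℝ × ℝ → ℝ) : ℝ × ℝ → ℝ := fun p => fderiv ℝ F p (0, 1)
noncomputable def Pd (F : ℝ × ℝ → ℝ) (p₁ p₂ : ℕ) : ℝ × ℝ → ℝ := D1^[p₁] (D2^[p₂] F)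

lemma contDiff_D1 {F : ℝ × ℝ → ℝ} {n m : ℕ} (h : ContDiff ℝ (n : ℕ∞) F) (hm : m + 1 ≤ n) :
    ContDiff ℝ (m : ℕ∞) (D1 F) := by
  have h1 : ContDiff ℝ (m : ℕ∞) (fderiv ℝ F) := h.fderiv_right (by exact_mod_cast hm)
  exact h1.clm_apply contDiff_const

lemma contDiff_D2 {F : ℝ × ℝ → ℝ} {n m : ℕ} (h : ContDiff ℝ (n : ℕ∞) F) (hm : m + 1 ≤ n) :
    ContDiff ℝ (m : ℕ∞) (D2 F) := by
  have h1 : ContDiff ℝ (m : ℕ∞) (fderiv ℝ F) := h.fderiv_right (by exact_mod_cast hm)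
  exact h1.clm_apply contDiff_const

lemma contDiff_D2iter {F : ℝ × ℝ → ℝ} {n : ℕ} (h : ContDiff ℝ (n : ℕ∞) F) :
    ∀ j m : ℕ, m + j ≤ n → ContDiff ℝ (m : ℕ∞) (D2^[j] F) := by
  intro j
  induction j with
  | zero => intro m hm; exact h.of_le (by exact_mod_cast by omega)
  | succ j ih =>
    intro m hm
    rw [Function.iterate_succ_apply']
    exact contDiff_D2 (n := m + 1) (ih (m+1) (by omega)) le_rfl

lemma contDiff_Pd {F : ℝ × ℝ → ℝ} {n : ℕ} (h : ContDiff ℝ (n : ℕ∞) F) :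
    ∀ p₁ p₂ m : ℕ, m + p₁ + p₂ ≤ n → ContDiff ℝ (m : ℕ∞) (Pd F p₁ p₂) := by
  intro p₁
  induction p₁ with
  | zero => intro p₂ m hm; exact contDiff_D2iter h p₂ m (by omega)
  | succ p₁ ih =>
    intro p₂ m hm
    unfold Pd
    rw [Function.iterate_succ_apply']
    exact contDiff_D1 (n := m + 1) (ih p₂ (m+1) (by omega)) le_rfl

lemma fderiv_app {H : ℝ × ℝ → ℝ} {p : ℝ × ℝ} (hH : DifferentiableAt ℝ (fderiv ℝ H) p)
    (v w : ℝ × ℝ) :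
    fderiv ℝ (fun q => fderiv ℝ H q v) p w = fderiv ℝ (fderiv ℝ H) p w v := by
  have h2 : HasFDerivAt (fun q => fderiv ℝ H q v)
      ((ContinuousLinearMap.apply ℝ ℝ v).comp (fderiv ℝ (fderiv ℝ H) p)) p :=
    (ContinuousLinearMap.apply ℝ ℝ v).hasFDerivAt.comp p hH.hasFDerivAt
  rw [h2.fderiv]; rfl

lemma D2_D1_swap {H : ℝ × ℝ → ℝ} {n : ℕ} (h : ContDiff ℝ (n : ℕ∞) H) (hn : 2 ≤ n) :
    D2 (D1 H) = D1 (D2 H) := by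
  funext p
  have hd : DifferentiableAt ℝ (fderiv ℝ H) p := by
    have : ContDiff ℝ ((1 : ℕ) : ℕ∞) (fderiv ℝ H) := h.fderiv_right (by exact_mod_cast hn)
    exact (this.differentiable (by norm_cast)).differentiableAt
  have hsymm : IsSymmSndFDerivAt ℝ H p :=
    h.contDiffAt.isSymmSndFDerivAt (by rw [minSmoothness_of_isRCLikeNormedField]; exact WithTop.coe_le_coe.2 (by exact_mod_cast hn))
  show fderiv ℝ (fun q => fderiv ℝ H q (1,0)) p (0,1) = fderiv ℝ (fun q => fderiv ℝ H q (0,1)) p (1,0)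
  rw [fderiv_app hd, fderiv_app hd]
  exact hsymm _ _

lemma D2_D1_iter : ∀ (p : ℕ) (H : ℝ × ℝ → ℝ) (n : ℕ), ContDiff ℝ (n : ℕ∞) H → p + 1 ≤ n →
    D2 (D1^[p] H) = D1^[p] (D2 H) := by
  intro p
  induction p with
  | zero => intro H n _ _; rfl
  | succ p ih =>
    intro H n h hp
    rw [Function.iterate_succ_apply]
    rw [ih (D1 H) (n - 1) (contDiff_D1 h (by omega)) (by omega)]
    rw [D2_D1_swap h (by omega)]
    rw [← Function.iterate_succ_apply]

lemma D1_Pd (F : ℝ × ℝ → ℝ) (p₁ p₂ : ℕ) : D1 (Pd F p₁ p₂) = Pd F (p₁ + 1) p₂ :=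
  (Function.iterate_succ_apply' D1 p₁ _).symm

lemma D2_Pd {F : ℝ × ℝ → ℝ} {n : ℕ} (h : ContDiff ℝ (n : ℕ∞) F) (p₁ p₂ : ℕ)
    (hp : p₁ + p₂ + 1 ≤ n) : D2 (Pd F p₁ p₂) = Pd F p₁ (p₂ + 1) := by
  unfold Pd
  rw [D2_D1_iter p₁ (D2^[p₂] F) (n - p₂) (contDiff_D2iter h p₂ (n - p₂) (by omega)) (by omega)]
  rw [← Function.iterate_succ_apply' D2 p₂ F]


lemma deriv_fst {G : ℝ × ℝ → ℝ} {x z : ℝ} (hG : DifferentiableAt ℝ G (x, z)) :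
    deriv (fun u => G (u, z)) x = D1 G (x, z) := by
  have hι : HasDerivAt (fun u : ℝ => (u, z)) ((1 : ℝ), (0 : ℝ)) x :=
    (hasDerivAt_id x).prodMk (hasDerivAt_const x z)
  exact (hG.hasFDerivAt.comp_hasDerivAt x hι).deriv

lemma deriv_snd {G : ℝ × ℝ → ℝ} {x z : ℝ} (hG : DifferentiableAt ℝ G (x, z)) :
    deriv (fun t => G (x, t)) z = D2 G (x, z) := by
  have hι : HasDerivAt (fun t : ℝ => (x, t)) ((0 : ℝ), (1 : ℝ)) z :=
    (hasDerivAt_const z x).prodMk (hasDerivAt_id z)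
  exact (hG.hasFDerivAt.comp_hasDerivAt z hι).deriv

lemma diffble_of_cd1 {F : ℝ × ℝ → ℝ} (h : ContDiff ℝ ((1:ℕ) : ℕ∞) F) : Differentiable ℝ F :=
  h.differentiable (by norm_cast)

lemma iteratedDeriv_snd {F : ℝ × ℝ → ℝ} {n : ℕ} (h : ContDiff ℝ (n : ℕ∞) F) :
    ∀ p₂ : ℕ, p₂ ≤ n → ∀ u z : ℝ, iteratedDeriv p₂ (fun t => F (u, t)) z = D2^[p₂] F (u, z) := by
  intro p₂
  induction p₂ with
  | zero => intro _ u z; simp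
  | succ p ih =>
    intro hp u z
    rw [iteratedDeriv_succ]
    have h1 : iteratedDeriv p (fun t => F (u, t)) = fun t => D2^[p] F (u, t) :=
      funext fun t => ih (by omega) u t
    rw [h1, deriv_snd (diffble_of_cd1 (contDiff_D2iter h p 1 (by omega))).differentiableAt,
      Function.iterate_succ_apply' D2 p F]

lemma iteratedDeriv_fst {F : ℝ × ℝ → ℝ} {n : ℕ} (h : ContDiff ℝ (n : ℕ∞) F) :
    ∀ p₁ : ℕ, p₁ ≤ n → ∀ x z : ℝ, iteratedDeriv p₁ (fun u => F (u, z)) x = D1^[p₁] F (x, z) := by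
  intro p₁
  induction p₁ with
  | zero => intro _ x z; simp
  | succ p ih =>
    intro hp x z
    rw [iteratedDeriv_succ]
    have h1 : iteratedDeriv p (fun u => F (u, z)) = fun u => D1^[p] F (u, z) :=
      funext fun u => ih (by omega) u z
    have hd : DifferentiableAt ℝ (D1^[p] F) (x, z) :=
      (diffble_of_cd1 (contDiff_Pd h p 0 1 (by omega))).differentiableAt
    rw [h1, deriv_fst hd, Function.iterate_succ_apply' D1 p F]

lemma Dp_eq_Pd {f : ℝ → ℝ → ℝ} {n : ℕ} (h : ContDiff ℝ (n : ℕ∞) (Function.uncurry f))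
    (p₁ p₂ : ℕ) (hp : p₁ + p₂ ≤ n) (x z : ℝ) :
    Dp f p₁ p₂ x z = Pd (Function.uncurry f) p₁ p₂ (x, z) := by
  unfold Dp
  have h1 : (fun u => iteratedDeriv p₂ (f u) z)
      = fun u => D2^[p₂] (Function.uncurry f) (u, z) :=
    funext fun u => iteratedDeriv_snd h p₂ (by omega) u z
  rw [h1]
  exact iteratedDeriv_fst (contDiff_D2iter h p₂ (n - p₂) (by omega)) p₁ (by omega) x z

/-! ### Formal expressions -/

abbrev Mono := List (ℕ × ℕ)

noncomputable def evalM (F : ℝ × ℝ → ℝ) (m : Mono) (p : ℝ × ℝ) : ℝ :=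
  (m.map (fun q => Pd F q.1 q.2 p)).prod

noncomputable def evalE (F : ℝ × ℝ → ℝ) (E : List Mono) (p : ℝ × ℝ) : ℝ :=
  (E.map (fun m => evalM F m p)).sum

def dxM : Mono → List Mono
  | [] => []
  | q :: t => ((q.1 + 1, q.2) :: t) :: (dxM t).map (q :: ·)

def dzM : Mono → List Mono
  | [] => []
  | q :: t => ((q.1, q.2 + 1) :: t) :: (dzM t).map (q :: ·)

def step (E : List Mono) : List Mono :=
  (E.flatMap dxM) ++ ((E.flatMap dzM).map (((0,0) : ℕ × ℕ) :: ·))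

def Ex : ℕ → List Mono
  | 0 => [[(0, 0)]]
  | k + 1 => step (Ex k)

lemma evalM_nil (F : ℝ × ℝ → ℝ) : evalM F [] = fun _ => 1 := rfl

lemma evalM_cons (F : ℝ × ℝ → ℝ) (q : ℕ × ℕ) (t : Mono) :
    evalM F (q :: t) = fun p => Pd F q.1 q.2 p * evalM F t p := by
  funext p; simp [evalM]

lemma evalE_nil (F : ℝ × ℝ → ℝ) : evalE F [] = fun _ => 0 := rfl

lemma evalE_cons (F : ℝ × ℝ → ℝ) (m : Mono) (E : List Mono) :
    evalE F (m :: E) = fun p => evalM F m p + evalE F E p := by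
  funext p; simp [evalE]

lemma evalE_append (F : ℝ × ℝ → ℝ) (E₁ E₂ : List Mono) (p : ℝ × ℝ) :
    evalE F (E₁ ++ E₂) p = evalE F E₁ p + evalE F E₂ p := by
  simp [evalE]

lemma evalM_cons_apply (F : ℝ × ℝ → ℝ) (q : ℕ × ℕ) (t : Mono) (p : ℝ × ℝ) :
    evalM F (q :: t) p = Pd F q.1 q.2 p * evalM F t p := by
  simp [evalM]

lemma evalE_cons_apply (F : ℝ × ℝ → ℝ) (m : Mono) (E : List Mono) (p : ℝ × ℝ) :
    evalE F (m :: E) p = evalM F m p + evalE F E p := by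
  simp [evalE]

lemma evalE_map_cons (F : ℝ × ℝ → ℝ) (q : ℕ × ℕ) (L : List Mono) (p : ℝ × ℝ) :
    evalE F (L.map (q :: ·)) p = Pd F q.1 q.2 p * evalE F L p := by
  induction L with
  | nil => simp [evalE]
  | cons m L ih => simp [evalE_cons, ih, evalM_cons, mul_add]

lemma evalM_contDiff {F : ℝ × ℝ → ℝ} {n : ℕ} (h : ContDiff ℝ (n : ℕ∞) F) :
    ∀ m : Mono, (∀ q ∈ m, q.1 + q.2 + 1 ≤ n) → ContDiff ℝ ((1:ℕ) : ℕ∞) (evalM F m) := by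
  intro m
  induction m with
  | nil => intro _; rw [evalM_nil]; exact contDiff_const
  | cons q t ih =>
    intro hm
    rw [evalM_cons]
    exact (contDiff_Pd h q.1 q.2 1 (by have := hm q (by simp); omega)).mul
      (ih fun q' hq' => hm q' (by simp [hq']))

lemma evalE_contDiff {F : ℝ × ℝ → ℝ} {n : ℕ} (h : ContDiff ℝ (n : ℕ∞) F) :
    ∀ E : List Mono, (∀ m ∈ E, ∀ q ∈ m, q.1 + q.2 + 1 ≤ n) →
    ContDiff ℝ ((1:ℕ) : ℕ∞) (evalE F E) := by
  intro E
  induction E with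
  | nil => intro _; rw [evalE_nil]; exact contDiff_const
  | cons m E ih =>
    intro hE
    rw [evalE_cons]
    exact (evalM_contDiff h m (hE m (by simp))).add (ih fun m' hm' => hE m' (by simp [hm']))

lemma D_evalM {F : ℝ × ℝ → ℝ} {n : ℕ} (h : ContDiff ℝ (n : ℕ∞) F) :
    ∀ m : Mono, (∀ q ∈ m, q.1 + q.2 + 1 ≤ n) →
    D1 (evalM F m) = evalE F (dxM m) ∧ D2 (evalM F m) = evalE F (dzM m) := by
  intro m
  induction m with
  | nil =>
    intro _
    constructor <;> · funext p; simp [D1, D2, evalM_nil, evalE_nil, dxM, dzM, evalE]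
  | cons q t ih =>
    intro hm
    have hq : q.1 + q.2 + 1 ≤ n := hm q (by simp)
    have ht : ∀ q' ∈ t, q'.1 + q'.2 + 1 ≤ n := fun q' hq' => hm q' (by simp [hq'])
    have hA : Differentiable ℝ (Pd F q.1 q.2) := diffble_of_cd1 (contDiff_Pd h q.1 q.2 1 (by omega))
    have hB : Differentiable ℝ (evalM F t) := diffble_of_cd1 (evalM_contDiff h t ht)
    have ihx := (ih ht).1
    have ihz := (ih ht).2
    constructor
    · funext p
      rw [evalM_cons]
      show fderiv ℝ (fun p => Pd F q.1 q.2 p * evalM F t p) p (1, 0) = _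
      rw [fderiv_fun_mul (hA p) (hB p)]
      simp only [ContinuousLinearMap.add_apply, ContinuousLinearMap.smul_apply, smul_eq_mul]
      rw [dxM, evalE_cons_apply, evalE_map_cons, evalM_cons_apply]
      have e1 : fderiv ℝ (Pd F q.1 q.2) p (1, 0) = Pd F (q.1 + 1) q.2 p := by
        rw [← D1_Pd]; rfl
      have e2 : fderiv ℝ (evalM F t) p (1, 0) = evalE F (dxM t) p := by
        rw [show fderiv ℝ (evalM F t) p (1, 0) = D1 (evalM F t) p from rfl, ihx]
      rw [e1, e2]; ring
    · funext p
      rw [evalM_cons]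
      show fderiv ℝ (fun p => Pd F q.1 q.2 p * evalM F t p) p (0, 1) = _
      rw [fderiv_fun_mul (hA p) (hB p)]
      simp only [ContinuousLinearMap.add_apply, ContinuousLinearMap.smul_apply, smul_eq_mul]
      rw [dzM, evalE_cons_apply, evalE_map_cons, evalM_cons_apply]
      have e1 : fderiv ℝ (Pd F q.1 q.2) p (0, 1) = Pd F q.1 (q.2 + 1) p := by
        rw [show fderiv ℝ (Pd F q.1 q.2) p (0, 1) = D2 (Pd F q.1 q.2) p from rfl,
          D2_Pd h q.1 q.2 hq]
      have e2 : fderiv ℝ (evalM F t) p (0, 1) = evalE F (dzM t) p := by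
        rw [show fderiv ℝ (evalM F t) p (0, 1) = D2 (evalM F t) p from rfl, ihz]
      rw [e1, e2]; ring

lemma D_evalE {F : ℝ × ℝ → ℝ} {n : ℕ} (h : ContDiff ℝ (n : ℕ∞) F) :
    ∀ E : List Mono, (∀ m ∈ E, ∀ q ∈ m, q.1 + q.2 + 1 ≤ n) →
    D1 (evalE F E) = evalE F (E.flatMap dxM) ∧ D2 (evalE F E) = evalE F (E.flatMap dzM) := by
  intro E
  induction E with
  | nil =>
    intro _
    constructor <;> · funext p; simp [D1, D2, evalE_nil, evalE]
  | cons m E ih =>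
    intro hE
    have hm := hE m (by simp)
    have hErest : ∀ m' ∈ E, ∀ q ∈ m', q.1 + q.2 + 1 ≤ n := fun m' hm' => hE m' (by simp [hm'])
    have hA : Differentiable ℝ (evalM F m) := diffble_of_cd1 (evalM_contDiff h m hm)
    have hB : Differentiable ℝ (evalE F E) := diffble_of_cd1 (evalE_contDiff h E hErest)
    constructor
    · funext p
      rw [evalE_cons]
      show fderiv ℝ (fun p => evalM F m p + evalE F E p) p (1, 0) = _
      rw [fderiv_fun_add (hA p) (hB p)]
      rw [List.flatMap_cons, evalE_append]
      simp only [ContinuousLinearMap.add_apply]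

      rw [show fderiv ℝ (evalM F m) p (1,0) = D1 (evalM F m) p from rfl, (D_evalM h m hm).1,
        show fderiv ℝ (evalE F E) p (1,0) = D1 (evalE F E) p from rfl, (ih hErest).1]
    · funext p
      rw [evalE_cons]
      show fderiv ℝ (fun p => evalM F m p + evalE F E p) p (0, 1) = _
      rw [fderiv_fun_add (hA p) (hB p)]
      rw [List.flatMap_cons, evalE_append]
      simp only [ContinuousLinearMap.add_apply]
      rw [show fderiv ℝ (evalM F m) p (0,1) = D2 (evalM F m) p from rfl, (D_evalM h m hm).2,
        show fderiv ℝ (evalE F E) p (0,1) = D2 (evalE F E) p from rfl, (ih hErest).2]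

lemma evalE_step {F : ℝ × ℝ → ℝ} {n : ℕ} (h : ContDiff ℝ (n : ℕ∞) F) (E : List Mono)
    (hE : ∀ m ∈ E, ∀ q ∈ m, q.1 + q.2 + 1 ≤ n) (p : ℝ × ℝ) :
    evalE F (step E) p = D1 (evalE F E) p + F p * D2 (evalE F E) p := by
  rw [step, evalE_append, evalE_map_cons, (D_evalE h E hE).1, (D_evalE h E hE).2]
  rfl


/-! ### Combinatorics -/

lemma length_dxM (m : Mono) : (dxM m).length = m.length := by
  induction m with
  | nil => rfl
  | cons q t ih => simp [dxM, ih]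

lemma length_dzM (m : Mono) : (dzM m).length = m.length := by
  induction m with
  | nil => rfl
  | cons q t ih => simp [dzM, ih]

lemma dxM_spec {k : ℕ} : ∀ m : Mono, (∀ q ∈ m, q.1 + q.2 ≤ k) →
    ∀ m' ∈ dxM m, m'.length = m.length ∧ ∀ q' ∈ m', q'.1 + q'.2 ≤ k + 1 := by
  intro m
  induction m with
  | nil => intro _ m' hm'; simp [dxM] at hm'
  | cons q t ih =>
    intro hm m' hm'
    rw [dxM] at hm'
    rcases List.mem_cons.1 hm' with h | h
    · subst h
      refine ⟨by simp, ?_⟩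
      intro q' hq'
      rcases List.mem_cons.1 hq' with h' | h'
      · subst h'; have := hm q (by simp); simp; omega
      · have := hm q' (by simp [h']); omega
    · obtain ⟨m'', hm'', rfl⟩ := List.mem_map.1 h
      have := ih (fun q' hq' => hm q' (by simp [hq'])) m'' hm''
      refine ⟨by simp [this.1], ?_⟩
      intro q' hq'
      rcases List.mem_cons.1 hq' with h' | h'
      · subst h'; have := hm q' (by simp); omega
      · exact this.2 q' h'

lemma dzM_spec {k : ℕ} : ∀ m : Mono, (∀ q ∈ m, q.1 + q.2 ≤ k) →
    ∀ m' ∈ dzM m, m'.length = m.length ∧ ∀ q' ∈ m', q'.1 + q'.2 ≤ k + 1 := by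
  intro m
  induction m with
  | nil => intro _ m' hm'; simp [dzM] at hm'
  | cons q t ih =>
    intro hm m' hm'
    rw [dzM] at hm'
    rcases List.mem_cons.1 hm' with h | h
    · subst h
      refine ⟨by simp, ?_⟩
      intro q' hq'
      rcases List.mem_cons.1 hq' with h' | h'
      · subst h'; have := hm q (by simp); simp; omega
      · have := hm q' (by simp [h']); omega
    · obtain ⟨m'', hm'', rfl⟩ := List.mem_map.1 h
      have := ih (fun q' hq' => hm q' (by simp [hq'])) m'' hm''
      refine ⟨by simp [this.1], ?_⟩
      intro q' hq'
      rcases List.mem_cons.1 hq' with h' | h'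
      · subst h'; have := hm q' (by simp); omega
      · exact this.2 q' h'

lemma Ex_spec : ∀ k : ℕ, ∀ m ∈ Ex k, m.length ≤ k + 1 ∧ ∀ q ∈ m, q.1 + q.2 ≤ k := by
  intro k
  induction k with
  | zero =>
    intro m hm
    simp [Ex] at hm
    subst hm
    constructor
    · simp
    · intro q hq; simp at hq; subst hq; simp
  | succ k ih =>
    intro m hm
    rw [Ex, step] at hm
    rcases List.mem_append.1 hm with h | h
    · obtain ⟨m₀, hm₀, hmem⟩ := List.mem_flatMap.1 h
      have h₀ := ih m₀ hm₀
      have := dxM_spec m₀ h₀.2 m hmem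
      exact ⟨by omega, this.2⟩
    · obtain ⟨m', hm', rfl⟩ := List.mem_map.1 h
      obtain ⟨m₀, hm₀, hmem⟩ := List.mem_flatMap.1 hm'
      have h₀ := ih m₀ hm₀
      have := dzM_spec m₀ h₀.2 m' hmem
      constructor
      · simp; omega
      · intro q hq
        rcases List.mem_cons.1 hq with h' | h'
        · subst h'; simp
        · exact this.2 q h'

lemma Ex_length : ∀ k : ℕ, (Ex k).length ≤ 2 ^ k * k.factorial := by
  intro k
  induction k with
  | zero => simp [Ex]
  | succ k ih =>
    rw [Ex, step]
    have hx : ((Ex k).flatMap dxM).length ≤ (Ex k).length * (k + 1) := by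
      rw [List.length_flatMap]
      calc ((Ex k).map fun m => (dxM m).length).sum
          ≤ ((Ex k).map fun m => (dxM m).length).length • (k + 1) := by
            apply List.sum_le_card_nsmul
            intro x hx
            obtain ⟨m, hm, rfl⟩ := List.mem_map.1 hx
            rw [length_dxM]
            exact (Ex_spec k m hm).1
        _ = (Ex k).length * (k + 1) := by simp [smul_eq_mul]
    have hz : ((Ex k).flatMap dzM).length ≤ (Ex k).length * (k + 1) := by
      rw [List.length_flatMap]
      calc ((Ex k).map fun m => (dzM m).length).sum
          ≤ ((Ex k).map fun m => (dzM m).length).length • (k + 1) := by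
            apply List.sum_le_card_nsmul
            intro x hx
            obtain ⟨m, hm, rfl⟩ := List.mem_map.1 hx
            rw [length_dzM]
            exact (Ex_spec k m hm).1
        _ = (Ex k).length * (k + 1) := by simp [smul_eq_mul]
    calc (((Ex k).flatMap dxM) ++ (((Ex k).flatMap dzM).map (((0,0) : ℕ × ℕ) :: ·))).length
        = ((Ex k).flatMap dxM).length + ((Ex k).flatMap dzM).length := by simp
      _ ≤ (Ex k).length * (k + 1) + (Ex k).length * (k + 1) := by omega
      _ ≤ 2 ^ k * k.factorial * (k + 1) + 2 ^ k * k.factorial * (k + 1) := by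
          have := Nat.mul_le_mul_right (k + 1) ih; omega
      _ = 2 ^ (k + 1) * (k + 1).factorial := by
          rw [pow_succ, Nat.factorial_succ]; ring

/-! ### Bounds -/

lemma abs_evalM_le {F : ℝ × ℝ → ℝ} (p : ℝ × ℝ) :
    ∀ m : Mono, (∀ q ∈ m, |Pd F q.1 q.2 p| ≤ 1) → |evalM F m p| ≤ 1 := by
  intro m
  induction m with
  | nil => intro _; simp [evalM]
  | cons q t ih =>
    intro hm
    rw [evalM_cons_apply, abs_mul]
    have h1 := hm q (by simp)
    have h2 := ih fun q' hq' => hm q' (by simp [hq'])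
    have := abs_nonneg (Pd F q.1 q.2 p)
    have := abs_nonneg (evalM F t p)
    nlinarith

lemma abs_evalE_le {F : ℝ × ℝ → ℝ} (p : ℝ × ℝ) :
    ∀ E : List Mono, (∀ m ∈ E, |evalM F m p| ≤ 1) → |evalE F E p| ≤ E.length := by
  intro E
  induction E with
  | nil => intro _; simp [evalE]
  | cons m E ih =>
    intro hE
    rw [evalE_cons_apply]
    have h1 := hE m (by simp)
    have h2 := ih fun m' hm' => hE m' (by simp [hm'])
    calc |evalM F m p + evalE F E p| ≤ |evalM F m p| + |evalE F E p| := abs_add_le _ _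
      _ ≤ 1 + E.length := by linarith
      _ = ((m :: E).length : ℝ) := by simp; ring

end FactBound

open FactBound in
theorem nonautonomous_factorial_derivative_bound
    (β : ℕ) (f : ℝ → ℝ → ℝ) (y : ℝ → ℝ) (x₀ y₀ a b : ℝ) (ha : 0 < a) (hb : 0 < b)
    (hf : ContDiff ℝ (β : ℕ∞) (Function.uncurry f))
    (hcont : ContinuousOn (Function.uncurry f) (Icc (x₀ - a) (x₀ + a) ×ˢ Icc (y₀ - b) (y₀ + b)))
    (hbd : ∀ p₁ p₂ : ℕ, p₁ + p₂ ≤ β → ∀ x ∈ Icc (x₀ - a) (x₀ + a),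
      ∀ z ∈ Icc (y₀ - b) (y₀ + b), |Dp f p₁ p₂ x z| ≤ 1)
    (hlip : ∀ p₁ p₂ : ℕ, p₁ + p₂ = β → ∀ x ∈ Icc (x₀ - a) (x₀ + a),
      ∀ x' ∈ Icc (x₀ - a) (x₀ + a), ∀ z ∈ Icc (y₀ - b) (y₀ + b), ∀ z' ∈ Icc (y₀ - b) (y₀ + b),
      |Dp f p₁ p₂ x z - Dp f p₁ p₂ x' z'| ≤ max |x - x'| |z - z'|)
    (hy0 : y x₀ = y₀)
    (hode : ∀ x ∈ Icc (x₀ - a) (x₀ + a), HasDerivAt y (f x (y x)) x)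
    (htraj : ∀ x ∈ Icc (x₀ - a) (x₀ + a), y x ∈ Icc (y₀ - b) (y₀ + b)) :
    ∀ k, 1 ≤ k → k ≤ β + 1 → ∀ x ∈ Icc (x₀ - min a b) (x₀ + min a b),
      |iteratedDerivWithin k y (Icc (x₀ - a) (x₀ + a)) x| ≤
        2 ^ (k - 1) * (k - 1).factorial := by
  intro k hk1 hk2 x hx
  obtain ⟨j, rfl⟩ : ∃ j, k = j + 1 := ⟨k - 1, by omega⟩
  set s : Set ℝ := Icc (x₀ - a) (x₀ + a) with hs
  have hxm := hx
  rw [mem_Icc] at hxm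
  have hxs : x ∈ s := by
    rw [hs, mem_Icc]
    have h1 := min_le_left a b
    constructor <;> [linarith [hxm.1]; linarith [hxm.2]]
  have hu : UniqueDiffOn ℝ s := uniqueDiffOn_Icc (by linarith)
  set F := Function.uncurry f with hF
  have key : ∀ j : ℕ, j ≤ β → ∀ x' ∈ s,
      iteratedDerivWithin (j + 1) y s x' = evalE F (Ex j) (x', y x') := by
    intro j
    induction j with
    | zero =>
      intro _ x' hx'
      rw [iteratedDerivWithin_one,
        (hode x' hx').hasDerivWithinAt.derivWithin (hu x' hx')]
      show f x' (y x') = evalE F (Ex 0) (x', y x')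
      show f x' (y x') = evalM F [(0,0)] (x', y x') + 0
      rw [evalM_cons_apply]
      show f x' (y x') = F (x', y x') * 1 + 0
      rw [hF]
      simp [Function.uncurry]
    | succ j ih =>
      intro hj x' hx'
      have hEx : ∀ m ∈ Ex j, ∀ q ∈ m, q.1 + q.2 + 1 ≤ β := by
        intro m hm q hq
        have := (Ex_spec j m hm).2 q hq
        omega
      have hdiff : Differentiable ℝ (evalE F (Ex j)) :=
        diffble_of_cd1 (evalE_contDiff hf _ hEx)
      rw [iteratedDerivWithin_succ]
      rw [derivWithin_congr (fun u hu' => ih (by omega) u hu') (ih (by omega) x' hx')]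
      have hγ : HasDerivAt (fun u => (u, y u)) ((1 : ℝ), f x' (y x')) x' :=
        (hasDerivAt_id x').prodMk (hode x' hx')
      have hc : HasDerivAt (fun u => evalE F (Ex j) (u, y u))
          (fderiv ℝ (evalE F (Ex j)) (x', y x') (1, f x' (y x'))) x' :=
        (hdiff _).hasFDerivAt.comp_hasDerivAt x' hγ
      rw [hc.hasDerivWithinAt.derivWithin (hu x' hx')]
      have hsplit : ((1 : ℝ), f x' (y x')) = ((1 : ℝ), (0 : ℝ)) + (f x' (y x')) • ((0:ℝ), (1:ℝ)) := by
        simp [Prod.ext_iff]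
      rw [hsplit, map_add, map_smul]
      rw [show Ex (j + 1) = step (Ex j) from rfl, evalE_step hf (Ex j) hEx (x', y x')]
      show D1 (evalE F (Ex j)) (x', y x') + f x' (y x') • D2 (evalE F (Ex j)) (x', y x')
          = D1 (evalE F (Ex j)) (x', y x') + F (x', y x') * D2 (evalE F (Ex j)) (x', y x')
      rw [smul_eq_mul]
      rfl
  rw [key j (by omega) x hxs]
  have hbound : |evalE F (Ex j) (x, y x)| ≤ (Ex j).length := by
    apply abs_evalE_le
    intro m hm
    apply abs_evalM_le
    intro q hq
    have hord : q.1 + q.2 ≤ β := le_trans ((Ex_spec j m hm).2 q hq) (by omega)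
    rw [← Dp_eq_Pd hf q.1 q.2 hord]
    exact hbd q.1 q.2 hord x hxs (y x) (htraj x hxs)
  calc |evalE F (Ex j) (x, y x)| ≤ (Ex j).length := hbound
    _ ≤ ((2 ^ j * j.factorial : ℕ) : ℝ) := by exact_mod_cast Ex_length j
    _ = 2 ^ (j + 1 - 1) * (j + 1 - 1).factorial := by push_cast; simp
end

section
/- Under the hypotheses of the nonautonomous factorial bound (f continuous with all partial derivatives of order ≤ β bounded by 1 in absolute value, and all β-th order partials Lipschitz with constant 1 in the max-metric), the solution y of y' = f(x, y) satisfies |y^(β+1)(x) - y^(β+1)(x')| ≤ 2^{β+1}(β+1)! · |x - x'| for all x, x' ∈ [x₀-α, x₀+α] with α = min(a,b). -/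
open Set

noncomputable def Dx (f : ℝ → ℝ → ℝ) : ℝ → ℝ → ℝ := fun x z => deriv (fun u => f u z) x
noncomputable def Dz (f : ℝ → ℝ → ℝ) : ℝ → ℝ → ℝ := fun x z => deriv (f x) z

/-- pure x iterated derivative -/
noncomputable def Dxi (j : ℕ) (f : ℝ → ℝ → ℝ) : ℝ → ℝ → ℝ :=
  fun x z => iteratedDeriv j (fun u => f u z) x
/-- pure z iterated derivative -/
noncomputable def Dzi (j : ℕ) (f : ℝ → ℝ → ℝ) : ℝ → ℝ → ℝ :=
  fun x z => iteratedDeriv j (f x) z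

lemma Dxi_zero (f : ℝ → ℝ → ℝ) : Dxi 0 f = f := by
  funext x z; simp [Dxi]

lemma Dzi_zero (f : ℝ → ℝ → ℝ) : Dzi 0 f = f := by
  funext x z; simp [Dzi]

lemma Dxi_succ (j : ℕ) (f : ℝ → ℝ → ℝ) : Dxi (j+1) f = Dx (Dxi j f) := by
  funext x z; simp only [Dxi, Dx, iteratedDeriv_succ]

lemma Dxi_succ' (j : ℕ) (f : ℝ → ℝ → ℝ) : Dxi (j+1) f = Dxi j (Dx f) := by
  funext x z; simp only [Dxi, Dx, iteratedDeriv_succ']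

lemma Dzi_succ (j : ℕ) (f : ℝ → ℝ → ℝ) : Dzi (j+1) f = Dz (Dzi j f) := by
  funext x z; simp only [Dzi, Dz, iteratedDeriv_succ]; rfl

lemma Dzi_succ' (j : ℕ) (f : ℝ → ℝ → ℝ) : Dzi (j+1) f = Dzi j (Dz f) := by
  funext x z
  simp only [Dzi, Dz, iteratedDeriv_succ']
  rfl

lemma Dp_eq (f : ℝ → ℝ → ℝ) (p₁ p₂ : ℕ) : Dp f p₁ p₂ = Dxi p₁ (Dzi p₂ f) := by
  funext x z; rfl

lemma Dp_zero_zero (f : ℝ → ℝ → ℝ) : Dp f 0 0 = f := by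
  rw [Dp_eq, Dxi_zero, Dzi_zero]

lemma Dp_succ_left (f : ℝ → ℝ → ℝ) (p₁ p₂ : ℕ) : Dp f (p₁+1) p₂ = Dx (Dp f p₁ p₂) := by
  rw [Dp_eq, Dp_eq, Dxi_succ]

lemma Dp_Dz (f : ℝ → ℝ → ℝ) (p₁ p₂ : ℕ) : Dp (Dz f) p₁ p₂ = Dp f p₁ (p₂+1) := by
  rw [Dp_eq, Dp_eq, Dzi_succ']

/-- slices of jointly smooth functions are smooth -/
lemma contDiff_slice_x {n : WithTop ℕ∞} {f : ℝ → ℝ → ℝ}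
    (hf : ContDiff ℝ n (Function.uncurry f)) (z : ℝ) : ContDiff ℝ n (fun x => f x z) :=
  hf.comp (contDiff_id.prodMk contDiff_const)

lemma contDiff_slice_z {n : WithTop ℕ∞} {f : ℝ → ℝ → ℝ}
    (hf : ContDiff ℝ n (Function.uncurry f)) (x : ℝ) : ContDiff ℝ n (f x) :=
  hf.comp (contDiff_const.prodMk contDiff_id)

lemma hasDerivAt_slice_x {f : ℝ → ℝ → ℝ} {x z : ℝ}
    (h : DifferentiableAt ℝ (Function.uncurry f) (x, z)) :
    HasDerivAt (fun u => f u z) (fderiv ℝ (Function.uncurry f) (x, z) (1, 0)) x := by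
  have hc : HasDerivAt (fun u : ℝ => (u, z)) ((1 : ℝ), (0 : ℝ)) x := by
    simpa using (hasDerivAt_id x).prodMk (hasDerivAt_const x z)
  exact h.hasFDerivAt.comp_hasDerivAt x hc

lemma hasDerivAt_slice_z {f : ℝ → ℝ → ℝ} {x z : ℝ}
    (h : DifferentiableAt ℝ (Function.uncurry f) (x, z)) :
    HasDerivAt (f x) (fderiv ℝ (Function.uncurry f) (x, z) (0, 1)) z := by
  have hc : HasDerivAt (fun w : ℝ => (x, w)) ((0 : ℝ), (1 : ℝ)) z := by
    simpa using (hasDerivAt_const z x).prodMk (hasDerivAt_id z)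
  exact h.hasFDerivAt.comp_hasDerivAt z hc

lemma Dx_eq_fderiv {f : ℝ → ℝ → ℝ} {x z : ℝ}
    (h : DifferentiableAt ℝ (Function.uncurry f) (x, z)) :
    Dx f x z = fderiv ℝ (Function.uncurry f) (x, z) (1, 0) :=
  (hasDerivAt_slice_x h).deriv

lemma Dz_eq_fderiv {f : ℝ → ℝ → ℝ} {x z : ℝ}
    (h : DifferentiableAt ℝ (Function.uncurry f) (x, z)) :
    Dz f x z = fderiv ℝ (Function.uncurry f) (x, z) (0, 1) :=
  (hasDerivAt_slice_z h).deriv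

lemma contDiff_fderiv_apply {n : ℕ} {F : ℝ × ℝ → ℝ}
    (hf : ContDiff ℝ ((n+1 : ℕ) : WithTop ℕ∞) F) (v : ℝ × ℝ) :
    ContDiff ℝ (n : WithTop ℕ∞) (fun p => fderiv ℝ F p v) := by
  have h1 : ContDiff ℝ (n : WithTop ℕ∞) (fderiv ℝ F) := by
    apply hf.fderiv_right
    exact_mod_cast le_of_eq (by push_cast; ring)
  exact (ContinuousLinearMap.apply ℝ ℝ v).contDiff.comp h1

lemma contDiff_uncurry_Dx {n : ℕ} {f : ℝ → ℝ → ℝ}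
    (hf : ContDiff ℝ ((n+1 : ℕ) : WithTop ℕ∞) (Function.uncurry f)) :
    ContDiff ℝ (n : WithTop ℕ∞) (Function.uncurry (Dx f)) := by
  have : Function.uncurry (Dx f) = fun p => fderiv ℝ (Function.uncurry f) p (1, 0) := by
    funext p
    exact Dx_eq_fderiv (hf.differentiable (by simp) _)
  rw [this]
  exact contDiff_fderiv_apply hf _

lemma contDiff_uncurry_Dz {n : ℕ} {f : ℝ → ℝ → ℝ}
    (hf : ContDiff ℝ ((n+1 : ℕ) : WithTop ℕ∞) (Function.uncurry f)) :
    ContDiff ℝ (n : WithTop ℕ∞) (Function.uncurry (Dz f)) := by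
  have : Function.uncurry (Dz f) = fun p => fderiv ℝ (Function.uncurry f) p (0, 1) := by
    funext p
    exact Dz_eq_fderiv (hf.differentiable (by simp) _)
  rw [this]
  exact contDiff_fderiv_apply hf _

lemma Dx_Dz_comm {f : ℝ → ℝ → ℝ} (hf : ContDiff ℝ 2 (Function.uncurry f)) :
    Dx (Dz f) = Dz (Dx f) := by
  funext x z
  set F := Function.uncurry f with hF
  have hd : Differentiable ℝ F := hf.differentiable (by norm_num)
  have hG : ContDiff ℝ 1 (fderiv ℝ F) := hf.fderiv_right (by norm_num)
  have hGd : Differentiable ℝ (fderiv ℝ F) := hG.differentiable one_ne_zero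
  set H := fderiv ℝ (fderiv ℝ F) (x, z) with hH
  have sym : ∀ v w, H v w = H w v := fun v w =>
    second_derivative_symmetric (fun p => (hd p).hasFDerivAt) ((hGd (x, z)).hasFDerivAt) v w
  have hcx : HasDerivAt (fun u : ℝ => (u, z)) ((1 : ℝ), (0 : ℝ)) x := by
    simpa using (hasDerivAt_id x).prodMk (hasDerivAt_const x z)
  have hcz : HasDerivAt (fun w : ℝ => (x, w)) ((0 : ℝ), (1 : ℝ)) z := by
    simpa using (hasDerivAt_const z x).prodMk (hasDerivAt_id z)
  have hx2 : HasDerivAt (fun u => fderiv ℝ F (u, z)) (H (1, 0)) x :=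
    (hGd (x, z)).hasFDerivAt.comp_hasDerivAt x hcx
  have hz2 : HasDerivAt (fun w => fderiv ℝ F (x, w)) (H (0, 1)) z :=
    (hGd (x, z)).hasFDerivAt.comp_hasDerivAt z hcz
  have hx1 : HasDerivAt (fun u => fderiv ℝ F (u, z) ((0 : ℝ), (1 : ℝ))) (H (1, 0) (0, 1)) x :=
    (ContinuousLinearMap.apply ℝ ℝ ((0 : ℝ), (1 : ℝ))).hasFDerivAt.comp_hasDerivAt x hx2
  have hz1 : HasDerivAt (fun w => fderiv ℝ F (x, w) ((1 : ℝ), (0 : ℝ))) (H (0, 1) (1, 0)) z :=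
    (ContinuousLinearMap.apply ℝ ℝ ((1 : ℝ), (0 : ℝ))).hasFDerivAt.comp_hasDerivAt z hz2
  calc Dx (Dz f) x z = deriv (fun u => Dz f u z) x := rfl
    _ = deriv (fun u => fderiv ℝ F (u, z) ((0 : ℝ), (1 : ℝ))) x := by
        congr 1; funext u; exact Dz_eq_fderiv (hd (u, z))
    _ = H (1, 0) (0, 1) := hx1.deriv
    _ = H (0, 1) (1, 0) := sym _ _
    _ = deriv (fun w => fderiv ℝ F (x, w) ((1 : ℝ), (0 : ℝ))) z := hz1.deriv.symm
    _ = deriv (fun w => Dx f x w) z := by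
        congr 1; funext w; exact (Dx_eq_fderiv (hd (x, w))).symm
    _ = Dz (Dx f) x z := rfl

lemma Dx_Dzi_comm {j : ℕ} {f : ℝ → ℝ → ℝ}
    (hf : ContDiff ℝ ((j + 1 : ℕ) : WithTop ℕ∞) (Function.uncurry f)) :
    Dx (Dzi j f) = Dzi j (Dx f) := by
  induction j generalizing f with
  | zero => rw [Dzi_zero, Dzi_zero]
  | succ j ih =>
    rw [Dzi_succ' j f, Dzi_succ' j (Dx f),
      ← Dx_Dz_comm (hf.of_le (by exact_mod_cast (by omega : (2 : ℕ) ≤ j + 1 + 1)))]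
    exact ih (contDiff_uncurry_Dz hf)

lemma Dz_Dxi_comm {j : ℕ} {f : ℝ → ℝ → ℝ}
    (hf : ContDiff ℝ ((j + 1 : ℕ) : WithTop ℕ∞) (Function.uncurry f)) :
    Dz (Dxi j f) = Dxi j (Dz f) := by
  induction j generalizing f with
  | zero => rw [Dxi_zero, Dxi_zero]
  | succ j ih =>
    rw [Dxi_succ' j f, Dxi_succ' j (Dz f),
      Dx_Dz_comm (hf.of_le (by exact_mod_cast (by omega : (2 : ℕ) ≤ j + 1 + 1)))]
    exact ih (contDiff_uncurry_Dx hf)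

lemma contDiff_uncurry_Dzi {n j : ℕ} {f : ℝ → ℝ → ℝ}
    (hf : ContDiff ℝ ((n + j : ℕ) : WithTop ℕ∞) (Function.uncurry f)) :
    ContDiff ℝ (n : WithTop ℕ∞) (Function.uncurry (Dzi j f)) := by
  induction j generalizing f with
  | zero => rw [Dzi_zero]; exact_mod_cast hf
  | succ j ih =>
    rw [Dzi_succ' j f]
    exact ih (contDiff_uncurry_Dz (n := n + j) hf)

lemma contDiff_uncurry_Dxi {n j : ℕ} {f : ℝ → ℝ → ℝ}
    (hf : ContDiff ℝ ((n + j : ℕ) : WithTop ℕ∞) (Function.uncurry f)) :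
    ContDiff ℝ (n : WithTop ℕ∞) (Function.uncurry (Dxi j f)) := by
  induction j generalizing f with
  | zero => rw [Dxi_zero]; exact_mod_cast hf
  | succ j ih =>
    rw [Dxi_succ' j f]
    exact ih (contDiff_uncurry_Dx (n := n + j) hf)

lemma contDiff_uncurry_Dp {n p₁ p₂ : ℕ} {f : ℝ → ℝ → ℝ}
    (hf : ContDiff ℝ ((n + p₁ + p₂ : ℕ) : WithTop ℕ∞) (Function.uncurry f)) :
    ContDiff ℝ (n : WithTop ℕ∞) (Function.uncurry (Dp f p₁ p₂)) := by
  rw [Dp_eq]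
  exact contDiff_uncurry_Dxi (contDiff_uncurry_Dzi (n := n + p₁) hf)

lemma Dp_Dx {p₁ p₂ : ℕ} {f : ℝ → ℝ → ℝ}
    (hf : ContDiff ℝ ((p₂ + 1 : ℕ) : WithTop ℕ∞) (Function.uncurry f)) :
    Dp (Dx f) p₁ p₂ = Dp f (p₁ + 1) p₂ := by
  rw [Dp_eq, Dp_eq, ← Dx_Dzi_comm (by exact_mod_cast hf), ← Dxi_succ']

lemma Dx_Dp (f : ℝ → ℝ → ℝ) (p₁ p₂ : ℕ) : Dx (Dp f p₁ p₂) = Dp f (p₁ + 1) p₂ := by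
  rw [Dp_eq, Dp_eq, ← Dxi_succ]

lemma Dz_Dp {p₁ p₂ : ℕ} {f : ℝ → ℝ → ℝ}
    (hf : ContDiff ℝ ((p₁ + 1 + p₂ : ℕ) : WithTop ℕ∞) (Function.uncurry f)) :
    Dz (Dp f p₁ p₂) = Dp f p₁ (p₂ + 1) := by
  rw [Dp_eq, Dp_eq, Dz_Dxi_comm (contDiff_uncurry_Dzi (n := p₁ + 1) hf), ← Dzi_succ]

lemma iteratedDeriv_add' {n : ℕ} {u v : ℝ → ℝ}
    (hu : ContDiff ℝ (n : WithTop ℕ∞) u) (hv : ContDiff ℝ (n : WithTop ℕ∞) v) (x : ℝ) :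
    iteratedDeriv n (fun t => u t + v t) x = iteratedDeriv n u x + iteratedDeriv n v x := by
  simp only [← iteratedDerivWithin_univ]
  exact iteratedDerivWithin_add (Set.mem_univ x) uniqueDiffOn_univ
    hu.contDiffWithinAt hv.contDiffWithinAt

lemma iteratedDeriv_sum' {ι : Type*} {n : ℕ} {s : Finset ι} {A : ι → ℝ → ℝ}
    (h : ∀ i ∈ s, ContDiff ℝ (n : WithTop ℕ∞) (A i)) (x : ℝ) :
    iteratedDeriv n (fun t => ∑ i ∈ s, A i t) x = ∑ i ∈ s, iteratedDeriv n (A i) x := by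
  simp only [iteratedDeriv_eq_iteratedFDeriv]
  have := iteratedFDeriv_sum (𝕜 := ℝ) (f := A) (u := s) (i := n) (fun j hj => h j hj)
  calc (iteratedFDeriv ℝ n (fun t => ∑ i ∈ s, A i t) x) (fun _ => 1)
      = ((∑ j ∈ s, iteratedFDeriv ℝ n (A j)) x) (fun _ => 1) := by rw [← this]
    _ = ∑ i ∈ s, (iteratedFDeriv ℝ n (A i) x) (fun _ => 1) := by
        simp [Finset.sum_apply, ContinuousMultilinearMap.sum_apply]

lemma iteratedDeriv_const_mul' {n : ℕ} {u : ℝ → ℝ} (c : ℝ)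
    (hu : ContDiff ℝ (n : WithTop ℕ∞) u) (x : ℝ) :
    iteratedDeriv n (fun t => c * u t) x = c * iteratedDeriv n u x := by
  simp only [← iteratedDerivWithin_univ]
  exact iteratedDerivWithin_const_mul (Set.mem_univ x) uniqueDiffOn_univ c hu.contDiffWithinAt

/-- One-dimensional Leibniz formula. -/
lemma iteratedDeriv_mul' {n : ℕ} {u v : ℝ → ℝ}
    (hu : ContDiff ℝ (n : WithTop ℕ∞) u) (hv : ContDiff ℝ (n : WithTop ℕ∞) v) (x : ℝ) :
    iteratedDeriv n (fun t => u t * v t) x =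
      ∑ q ∈ Finset.range (n + 1),
        (n.choose q : ℝ) * (iteratedDeriv q u x * iteratedDeriv (n - q) v x) := by
  induction n generalizing x with
  | zero => simp
  | succ n ih =>
    have hu' : ContDiff ℝ (n : WithTop ℕ∞) u := hu.of_le (by exact_mod_cast Nat.le_succ n)
    have hv' : ContDiff ℝ (n : WithTop ℕ∞) v := hv.of_le (by exact_mod_cast Nat.le_succ n)
    have hdu : ∀ q : ℕ, q ≤ n → ∀ t : ℝ, DifferentiableAt ℝ (iteratedDeriv q u) t := by
      intro q hq t
      exact (hu.differentiable_iteratedDeriv q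
        (by exact_mod_cast Nat.lt_succ_of_le hq)) t
    have hdv : ∀ q : ℕ, q ≤ n → ∀ t : ℝ, DifferentiableAt ℝ (iteratedDeriv q v) t := by
      intro q hq t
      exact (hv.differentiable_iteratedDeriv q
        (by exact_mod_cast Nat.lt_succ_of_le hq)) t
    rw [iteratedDeriv_succ]
    have hfun : iteratedDeriv n (fun t => u t * v t) = fun t =>
        ∑ q ∈ Finset.range (n + 1),
          (n.choose q : ℝ) * (iteratedDeriv q u t * iteratedDeriv (n - q) v t) :=
      funext fun t => ih hu' hv' t
    rw [hfun]
    have hterm : ∀ t : ℝ, ∀ q ∈ Finset.range (n + 1), DifferentiableAt ℝ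
        (fun t => (n.choose q : ℝ) * (iteratedDeriv q u t * iteratedDeriv (n - q) v t)) t := by
      intro t q hq
      rw [Finset.mem_range] at hq
      exact (((hdu q (by omega) t).mul (hdv (n - q) (by omega) t)).const_mul _)
    rw [deriv_fun_sum (fun q hq => hterm x q hq)]
    have hder : ∀ q ∈ Finset.range (n + 1),
        deriv (fun t => (n.choose q : ℝ) * (iteratedDeriv q u t * iteratedDeriv (n - q) v t)) x
        = (n.choose q : ℝ) * (iteratedDeriv (q + 1) u x * iteratedDeriv (n - q) v x)
          + (n.choose q : ℝ) * (iteratedDeriv q u x * iteratedDeriv (n + 1 - q) v x) := by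
      intro q hq
      rw [Finset.mem_range] at hq
      rw [deriv_const_mul (d := fun t => iteratedDeriv q u t * iteratedDeriv (n - q) v t) _
          ((hdu q (by omega) x).mul (hdv (n - q) (by omega) x)),
        deriv_fun_mul (hdu q (by omega) x) (hdv (n - q) (by omega) x)]
      rw [← iteratedDeriv_succ, ← iteratedDeriv_succ]
      have : n - q + 1 = n + 1 - q := by omega
      rw [this]
      ring
    rw [Finset.sum_congr rfl hder, Finset.sum_add_distrib]
    -- second sum : ∑_{q ∈ range (n+1)} C(n,q) D^q u D^{n+1-q} v
    -- = ∑_{q ∈ range (n+2)} C(n,q) D^q u D^{n+1-q} v  (top term zero)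
    have h2 : ∑ q ∈ Finset.range (n + 1),
        (n.choose q : ℝ) * (iteratedDeriv q u x * iteratedDeriv (n + 1 - q) v x)
        = ∑ q ∈ Finset.range (n + 2),
        (n.choose q : ℝ) * (iteratedDeriv q u x * iteratedDeriv (n + 1 - q) v x) := by
      rw [Finset.sum_range_succ (n := n + 1)]
      simp [Nat.choose_succ_self]
    -- reindex it backwards: ∑_{q∈range(n+2)} g q = ∑_{q ∈ range(n+1)} g (q+1) + g 0
    have h3 : ∑ q ∈ Finset.range (n + 2),
        (n.choose q : ℝ) * (iteratedDeriv q u x * iteratedDeriv (n + 1 - q) v x)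
        = (∑ q ∈ Finset.range (n + 1),
            (n.choose (q + 1) : ℝ) * (iteratedDeriv (q + 1) u x * iteratedDeriv (n - q) v x))
          + (n.choose 0 : ℝ) * (iteratedDeriv 0 u x * iteratedDeriv (n + 1) v x) := by
      rw [Finset.sum_range_succ' (fun q =>
        (n.choose q : ℝ) * (iteratedDeriv q u x * iteratedDeriv (n + 1 - q) v x)) (n + 1)]
      congr 1
      refine Finset.sum_congr rfl fun q hq => ?_
      rw [Finset.mem_range] at hq
      have : n + 1 - (q + 1) = n - q := by omega
      rw [this]
    rw [h2, h3]
    -- target RHS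
    rw [Finset.sum_range_succ' (fun q =>
      ((n + 1).choose q : ℝ) * (iteratedDeriv q u x * iteratedDeriv (n + 1 - q) v x)) (n + 1)]
    have h4 : ∀ q ∈ Finset.range (n + 1),
        (((n + 1).choose (q + 1) : ℝ)) * (iteratedDeriv (q + 1) u x
          * iteratedDeriv (n + 1 - (q + 1)) v x)
        = (n.choose q : ℝ) * (iteratedDeriv (q + 1) u x * iteratedDeriv (n - q) v x)
          + (n.choose (q + 1) : ℝ) * (iteratedDeriv (q + 1) u x * iteratedDeriv (n - q) v x) := by
      intro q hq
      have h5 : n + 1 - (q + 1) = n - q := by omega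
      rw [h5, Nat.choose_succ_succ]
      push_cast
      ring
    rw [Finset.sum_congr rfl h4, Finset.sum_add_distrib]
    simp only [Nat.choose_zero_right, Nat.cast_one, Nat.sub_zero]
    ring

lemma Dp_mul {n p₁ p₂ : ℕ} {f g : ℝ → ℝ → ℝ}
    (hf : ContDiff ℝ (n : WithTop ℕ∞) (Function.uncurry f))
    (hg : ContDiff ℝ (n : WithTop ℕ∞) (Function.uncurry g))
    (hn : p₁ + p₂ ≤ n) (x z : ℝ) :
    Dp (fun x z => f x z * g x z) p₁ p₂ x z
      = ∑ q₁ ∈ Finset.range (p₁ + 1), ∑ q₂ ∈ Finset.range (p₂ + 1),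
          (p₁.choose q₁ : ℝ) * (p₂.choose q₂ : ℝ)
            * (Dp f q₁ q₂ x z * Dp g (p₁ - q₁) (p₂ - q₂) x z) := by
  have slice_f : ∀ q₂ : ℕ, q₂ ≤ p₂ →
      ContDiff ℝ (p₁ : WithTop ℕ∞) (fun u => Dzi q₂ f u z) := by
    intro q₂ hq₂
    exact contDiff_slice_x (contDiff_uncurry_Dzi (n := p₁)
      (hf.of_le (by exact_mod_cast (by omega : p₁ + q₂ ≤ n)))) z
  have slice_g : ∀ q₂ : ℕ, q₂ ≤ p₂ →
      ContDiff ℝ (p₁ : WithTop ℕ∞) (fun u => Dzi q₂ g u z) := by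
    intro q₂ hq₂
    exact contDiff_slice_x (contDiff_uncurry_Dzi (n := p₁)
      (hg.of_le (by exact_mod_cast (by omega : p₁ + q₂ ≤ n)))) z
  have step1 : (fun u => iteratedDeriv p₂ (fun w => f u w * g u w) z) = fun u =>
      ∑ q₂ ∈ Finset.range (p₂ + 1),
        (p₂.choose q₂ : ℝ) * (Dzi q₂ f u z * Dzi (p₂ - q₂) g u z) := by
    funext u
    exact iteratedDeriv_mul'
      ((contDiff_slice_z hf u).of_le (by exact_mod_cast (by omega : p₂ ≤ n)))
      ((contDiff_slice_z hg u).of_le (by exact_mod_cast (by omega : p₂ ≤ n))) z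
  show iteratedDeriv p₁ (fun u => iteratedDeriv p₂ (fun w => f u w * g u w) z) x = _
  rw [step1]
  rw [iteratedDeriv_sum' (fun q₂ hq₂ => by
    rw [Finset.mem_range] at hq₂
    exact contDiff_const.mul ((slice_f q₂ (by omega)).mul (slice_g (p₂ - q₂) (by omega)))) x]
  rw [Finset.sum_comm]
  refine Finset.sum_congr rfl fun q₂ hq₂ => ?_
  rw [Finset.mem_range] at hq₂
  rw [iteratedDeriv_const_mul' _ ((slice_f q₂ (by omega)).mul (slice_g (p₂ - q₂) (by omega))) x]
  rw [iteratedDeriv_mul' (slice_f q₂ (by omega)) (slice_g (p₂ - q₂) (by omega)) x]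
  rw [Finset.mul_sum]
  refine Finset.sum_congr rfl fun q₁ hq₁ => ?_
  have e1 : iteratedDeriv q₁ (fun u => Dzi q₂ f u z) x = Dp f q₁ q₂ x z := rfl
  have e2 : iteratedDeriv (p₁ - q₁) (fun u => Dzi (p₂ - q₂) g u z) x
      = Dp g (p₁ - q₁) (p₂ - q₂) x z := rfl
  rw [e1, e2]
  ring

lemma Dp_add {n p₁ p₂ : ℕ} {f g : ℝ → ℝ → ℝ}
    (hf : ContDiff ℝ (n : WithTop ℕ∞) (Function.uncurry f))
    (hg : ContDiff ℝ (n : WithTop ℕ∞) (Function.uncurry g))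
    (hn : p₁ + p₂ ≤ n) (x z : ℝ) :
    Dp (fun x z => f x z + g x z) p₁ p₂ x z = Dp f p₁ p₂ x z + Dp g p₁ p₂ x z := by
  have slice_f : ∀ q₂ : ℕ, q₂ ≤ p₂ →
      ContDiff ℝ (p₁ : WithTop ℕ∞) (fun u => Dzi q₂ f u z) := fun q₂ hq₂ =>
    contDiff_slice_x (contDiff_uncurry_Dzi (n := p₁)
      (hf.of_le (by exact_mod_cast (by omega : p₁ + q₂ ≤ n)))) z
  have slice_g : ∀ q₂ : ℕ, q₂ ≤ p₂ →
      ContDiff ℝ (p₁ : WithTop ℕ∞) (fun u => Dzi q₂ g u z) := fun q₂ hq₂ =>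
    contDiff_slice_x (contDiff_uncurry_Dzi (n := p₁)
      (hg.of_le (by exact_mod_cast (by omega : p₁ + q₂ ≤ n)))) z
  have step1 : (fun u => iteratedDeriv p₂ (fun w => f u w + g u w) z) = fun u =>
      Dzi p₂ f u z + Dzi p₂ g u z := by
    funext u
    exact iteratedDeriv_add'
      ((contDiff_slice_z hf u).of_le (by exact_mod_cast (by omega : p₂ ≤ n)))
      ((contDiff_slice_z hg u).of_le (by exact_mod_cast (by omega : p₂ ≤ n))) z
  show iteratedDeriv p₁ (fun u => iteratedDeriv p₂ (fun w => f u w + g u w) z) x = _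
  rw [step1]
  exact iteratedDeriv_add' (slice_f p₂ le_rfl) (slice_g p₂ le_rfl) x

/-- Mean value: bounded partials on a convex product set imply a Lipschitz bound
in the max metric, with factor 2. -/
lemma lip_of_partials {w : ℝ → ℝ → ℝ} {M : ℝ} {X Z : Set ℝ} (hX : Convex ℝ X) (hZ : Convex ℝ Z)
    (hw : ContDiff ℝ (1 : WithTop ℕ∞) (Function.uncurry w))
    (hMx : ∀ x ∈ X, ∀ z ∈ Z, |Dx w x z| ≤ M)
    (hMz : ∀ x ∈ X, ∀ z ∈ Z, |Dz w x z| ≤ M)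
    {x x' z z' : ℝ} (hx : x ∈ X) (hx' : x' ∈ X) (hz : z ∈ Z) (hz' : z' ∈ Z) :
    |w x z - w x' z'| ≤ 2 * M * max |x - x'| |z - z'| := by
  set F := Function.uncurry w with hF
  have hd : Differentiable ℝ F := hw.differentiable one_ne_zero
  have hM0 : 0 ≤ M := le_trans (abs_nonneg _) (hMx x hx z hz)
  have hbound : ∀ p ∈ X ×ˢ Z, ‖fderiv ℝ F p‖ ≤ 2 * M := by
    rintro ⟨px, pz⟩ hp
    rw [Set.mem_prod] at hp
    refine ContinuousLinearMap.opNorm_le_bound _ (by positivity) fun v => ?_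
    have hv : v = v.1 • ((1 : ℝ), (0 : ℝ)) + v.2 • ((0 : ℝ), (1 : ℝ)) := by
      cases v; simp [Prod.ext_iff]
    have heq : fderiv ℝ F (px, pz) v
        = v.1 * fderiv ℝ F (px, pz) (1, 0) + v.2 * fderiv ℝ F (px, pz) (0, 1) := by
      conv_lhs => rw [hv]
      rw [map_add, map_smul, map_smul]
      simp
    rw [heq, ← Dx_eq_fderiv (hd (px, pz)), ← Dz_eq_fderiv (hd (px, pz))]
    have h1 : |v.1| ≤ ‖v‖ := norm_fst_le v
    have h2 : |v.2| ≤ ‖v‖ := norm_snd_le v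
    have hx1 := hMx _ hp.1 _ hp.2
    have hz1 := hMz _ hp.1 _ hp.2
    have t1 : |v.1| * |Dx w px pz| ≤ ‖v‖ * M :=
      mul_le_mul h1 hx1 (abs_nonneg _) (norm_nonneg _)
    have t2 : |v.2| * |Dz w px pz| ≤ ‖v‖ * M :=
      mul_le_mul h2 hz1 (abs_nonneg _) (norm_nonneg _)
    refine le_trans (norm_add_le _ _) ?_
    simp only [norm_mul, Real.norm_eq_abs]
    linarith
  have key := Convex.norm_image_sub_le_of_norm_fderiv_le
    (fun p _ => hd p) hbound (hX.prod hZ)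
    (Set.mk_mem_prod hx' hz') (Set.mk_mem_prod hx hz)
  have hnorm : ‖((x, z) : ℝ × ℝ) - (x', z')‖ = max |x - x'| |z - z'| := by
    rw [Prod.norm_def]
    simp [Real.norm_eq_abs]
  rw [hnorm] at key
  simpa [hF] using key

noncomputable def gseq (f : ℝ → ℝ → ℝ) : ℕ → ℝ → ℝ → ℝ
  | 0 => f
  | k + 1 => fun x z => Dx (gseq f k) x z + f x z * Dz (gseq f k) x z

lemma gseq_contDiff {β k : ℕ} {f : ℝ → ℝ → ℝ}
    (hf : ContDiff ℝ (β : WithTop ℕ∞) (Function.uncurry f)) (hk : k ≤ β) :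
    ContDiff ℝ ((β - k : ℕ) : WithTop ℕ∞) (Function.uncurry (gseq f k)) := by
  induction k with
  | zero => simpa [gseq] using hf
  | succ k ih =>
    have hgk := ih (by omega)
    have he : β - k = (β - (k + 1)) + 1 := by omega
    rw [he] at hgk
    have h1 : ContDiff ℝ ((β - (k + 1) : ℕ) : WithTop ℕ∞)
        (Function.uncurry (Dx (gseq f k))) := contDiff_uncurry_Dx hgk
    have h2 : ContDiff ℝ ((β - (k + 1) : ℕ) : WithTop ℕ∞)
        (Function.uncurry (Dz (gseq f k))) := contDiff_uncurry_Dz hgk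
    show ContDiff ℝ ((β - (k + 1) : ℕ) : WithTop ℕ∞) (fun p : ℝ × ℝ =>
      Dx (gseq f k) p.1 p.2 + f p.1 p.2 * Dz (gseq f k) p.1 p.2)
    exact h1.add (ContDiff.mul
      (hf.of_le (by exact_mod_cast (by omega : β - (k + 1) ≤ β))) h2)

lemma Dp_gseq_succ {β k p₁ p₂ : ℕ} {f : ℝ → ℝ → ℝ}
    (hf : ContDiff ℝ (β : WithTop ℕ∞) (Function.uncurry f)) (hk : k + 1 ≤ β)
    (hp : p₁ + p₂ ≤ β - (k + 1)) (x z : ℝ) :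
    Dp (gseq f (k + 1)) p₁ p₂ x z = Dp (gseq f k) (p₁ + 1) p₂ x z
      + ∑ q₁ ∈ Finset.range (p₁ + 1), ∑ q₂ ∈ Finset.range (p₂ + 1),
          (p₁.choose q₁ : ℝ) * (p₂.choose q₂ : ℝ)
            * (Dp f q₁ q₂ x z * Dp (gseq f k) (p₁ - q₁) (p₂ - q₂ + 1) x z) := by
  have hgk : ContDiff ℝ ((β - k : ℕ) : WithTop ℕ∞) (Function.uncurry (gseq f k)) :=
    gseq_contDiff hf (by omega)
  have he : β - k = (β - (k + 1)) + 1 := by omega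
  have hgk' : ContDiff ℝ (((β - (k + 1)) + 1 : ℕ) : WithTop ℕ∞)
      (Function.uncurry (gseq f k)) := by rw [← he]; exact hgk
  have h1 : ContDiff ℝ ((β - (k + 1) : ℕ) : WithTop ℕ∞)
      (Function.uncurry (Dx (gseq f k))) := contDiff_uncurry_Dx hgk'
  have h2 : ContDiff ℝ ((β - (k + 1) : ℕ) : WithTop ℕ∞)
      (Function.uncurry (Dz (gseq f k))) := contDiff_uncurry_Dz hgk'
  have hfle : ContDiff ℝ ((β - (k + 1) : ℕ) : WithTop ℕ∞) (Function.uncurry f) :=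
    hf.of_le (by exact_mod_cast (by omega : β - (k + 1) ≤ β))
  have hmul : ContDiff ℝ ((β - (k + 1) : ℕ) : WithTop ℕ∞)
      (Function.uncurry (fun x z => f x z * Dz (gseq f k) x z)) := hfle.mul h2
  have hsplit : gseq f (k + 1) = fun x z => Dx (gseq f k) x z
      + (fun x z => f x z * Dz (gseq f k) x z) x z := rfl
  rw [hsplit, Dp_add h1 hmul hp x z]
  congr 1
  · rw [← Dp_Dx (f := gseq f k) (p₁ := p₁) (p₂ := p₂)
      (hgk.of_le (by exact_mod_cast (by omega : p₂ + 1 ≤ β - k)))]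
  · rw [Dp_mul hfle h2 hp x z]
    refine Finset.sum_congr rfl fun q₁ _ => Finset.sum_congr rfl fun q₂ _ => ?_
    rw [Dp_Dz]

lemma binom_sum (p : ℕ) (t : ℝ) :
    ∑ q ∈ Finset.range (p + 1), (p.choose q : ℝ) * t ^ (p - q) = (1 + t) ^ p := by
  rw [add_pow]
  exact Finset.sum_congr rfl fun q hq => by rw [one_pow]; ring

lemma binom_sum2 (p₁ p₂ : ℕ) (t : ℝ) :
    ∑ q₁ ∈ Finset.range (p₁ + 1), ∑ q₂ ∈ Finset.range (p₂ + 1),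
        (p₁.choose q₁ : ℝ) * (p₂.choose q₂ : ℝ) * t ^ ((p₁ - q₁) + (p₂ - q₂))
      = (1 + t) ^ (p₁ + p₂) := by
  rw [pow_add, ← binom_sum p₁ t, ← binom_sum p₂ t, Finset.sum_mul_sum]
  exact Finset.sum_congr rfl fun q₁ _ => Finset.sum_congr rfl fun q₂ _ => by
    rw [pow_add]; ring

lemma gseq_bound {β : ℕ} {f : ℝ → ℝ → ℝ} {X Z : Set ℝ}
    (hf : ContDiff ℝ (β : WithTop ℕ∞) (Function.uncurry f))
    (hbd : ∀ p₁ p₂ : ℕ, p₁ + p₂ ≤ β → ∀ x ∈ X, ∀ z ∈ Z, |Dp f p₁ p₂ x z| ≤ 1) :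
    ∀ k, k ≤ β → ∀ p₁ p₂, p₁ + p₂ ≤ β - k → ∀ x ∈ X, ∀ z ∈ Z,
      |Dp (gseq f k) p₁ p₂ x z|
        ≤ 2 ^ k * (k.factorial : ℝ) * ((k : ℝ) + 1) ^ (p₁ + p₂) := by
  intro k
  induction k with
  | zero =>
    intro _ p₁ p₂ hp x hx z hz
    have := hbd p₁ p₂ (by omega) x hx z hz
    simpa [gseq] using this
  | succ k ih =>
    intro hk p₁ p₂ hp x hx z hz
    have e0 : ((k + 1 : ℕ) : ℝ) + 1 = (k : ℝ) + 1 + 1 := by push_cast; ring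
    rw [Dp_gseq_succ hf hk hp x z, e0]
    have h1 : |Dp (gseq f k) (p₁ + 1) p₂ x z|
        ≤ 2 ^ k * (k.factorial : ℝ) * ((k : ℝ) + 1) ^ (p₁ + p₂ + 1) := by
      have := ih (by omega) (p₁ + 1) p₂ (by omega) x hx z hz
      have e : p₁ + 1 + p₂ = p₁ + p₂ + 1 := by omega
      rwa [e] at this
    have hterm : ∀ q₁ ∈ Finset.range (p₁ + 1), ∀ q₂ ∈ Finset.range (p₂ + 1),
        |(p₁.choose q₁ : ℝ) * (p₂.choose q₂ : ℝ)
          * (Dp f q₁ q₂ x z * Dp (gseq f k) (p₁ - q₁) (p₂ - q₂ + 1) x z)|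
        ≤ (p₁.choose q₁ : ℝ) * (p₂.choose q₂ : ℝ)
          * (2 ^ k * (k.factorial : ℝ) * ((k : ℝ) + 1) ^ ((p₁ - q₁) + (p₂ - q₂) + 1)) := by
      intro q₁ hq₁ q₂ hq₂
      rw [Finset.mem_range] at hq₁ hq₂
      have hu : |Dp f q₁ q₂ x z| ≤ 1 := hbd q₁ q₂ (by omega) x hx z hz
      have hv : |Dp (gseq f k) (p₁ - q₁) (p₂ - q₂ + 1) x z|
          ≤ 2 ^ k * (k.factorial : ℝ) * ((k : ℝ) + 1) ^ ((p₁ - q₁) + (p₂ - q₂) + 1) := by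
        have := ih (by omega) (p₁ - q₁) (p₂ - q₂ + 1) (by omega) x hx z hz
        have e : (p₁ - q₁) + (p₂ - q₂ + 1) = (p₁ - q₁) + (p₂ - q₂) + 1 := by omega
        rwa [e] at this
      have hA : (0 : ℝ) ≤ 2 ^ k * (k.factorial : ℝ) * ((k : ℝ) + 1) ^ ((p₁ - q₁) + (p₂ - q₂) + 1) := by
        positivity
      rw [abs_mul, abs_mul, abs_mul]
      rw [Nat.abs_cast, Nat.abs_cast]
      have : |Dp f q₁ q₂ x z| * |Dp (gseq f k) (p₁ - q₁) (p₂ - q₂ + 1) x z|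
          ≤ 2 ^ k * (k.factorial : ℝ) * ((k : ℝ) + 1) ^ ((p₁ - q₁) + (p₂ - q₂) + 1) := by
        calc |Dp f q₁ q₂ x z| * |Dp (gseq f k) (p₁ - q₁) (p₂ - q₂ + 1) x z|
            ≤ 1 * (2 ^ k * (k.factorial : ℝ) * ((k : ℝ) + 1) ^ ((p₁ - q₁) + (p₂ - q₂) + 1)) :=
              mul_le_mul hu hv (abs_nonneg _) (by norm_num)
          _ = _ := one_mul _
      exact mul_le_mul_of_nonneg_left this (by positivity)
    have hsum : |∑ q₁ ∈ Finset.range (p₁ + 1), ∑ q₂ ∈ Finset.range (p₂ + 1),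
        (p₁.choose q₁ : ℝ) * (p₂.choose q₂ : ℝ)
          * (Dp f q₁ q₂ x z * Dp (gseq f k) (p₁ - q₁) (p₂ - q₂ + 1) x z)|
        ≤ 2 ^ k * (k.factorial : ℝ) * ((k : ℝ) + 1) * ((k : ℝ) + 2) ^ (p₁ + p₂) := by
      have habs : |∑ q₁ ∈ Finset.range (p₁ + 1), ∑ q₂ ∈ Finset.range (p₂ + 1),
          (p₁.choose q₁ : ℝ) * (p₂.choose q₂ : ℝ)
            * (Dp f q₁ q₂ x z * Dp (gseq f k) (p₁ - q₁) (p₂ - q₂ + 1) x z)|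
          ≤ ∑ q₁ ∈ Finset.range (p₁ + 1), ∑ q₂ ∈ Finset.range (p₂ + 1),
          (p₁.choose q₁ : ℝ) * (p₂.choose q₂ : ℝ)
            * (2 ^ k * (k.factorial : ℝ) * ((k : ℝ) + 1) ^ ((p₁ - q₁) + (p₂ - q₂) + 1)) := by
        refine le_trans (Finset.abs_sum_le_sum_abs _ _) (Finset.sum_le_sum fun q₁ hq₁ => ?_)
        exact le_trans (Finset.abs_sum_le_sum_abs _ _)
          (Finset.sum_le_sum fun q₂ hq₂ => hterm q₁ hq₁ q₂ hq₂)
      refine le_trans habs (le_of_eq ?_)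
      have : ∀ q₁ ∈ Finset.range (p₁ + 1), ∀ q₂ ∈ Finset.range (p₂ + 1),
          (p₁.choose q₁ : ℝ) * (p₂.choose q₂ : ℝ)
            * (2 ^ k * (k.factorial : ℝ) * ((k : ℝ) + 1) ^ ((p₁ - q₁) + (p₂ - q₂) + 1))
          = (2 ^ k * (k.factorial : ℝ) * ((k : ℝ) + 1))
            * ((p₁.choose q₁ : ℝ) * (p₂.choose q₂ : ℝ)
              * ((k : ℝ) + 1) ^ ((p₁ - q₁) + (p₂ - q₂))) := by
        intro q₁ _ q₂ _
        rw [pow_succ]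
        ring
      rw [Finset.sum_congr rfl fun q₁ hq₁ => Finset.sum_congr rfl fun q₂ hq₂ =>
        this q₁ hq₁ q₂ hq₂]
      simp only [← Finset.mul_sum]
      rw [binom_sum2 p₁ p₂ ((k : ℝ) + 1),
        show (1 : ℝ) + ((k : ℝ) + 1) = (k : ℝ) + 2 from by ring]
    calc |Dp (gseq f k) (p₁ + 1) p₂ x z + ∑ q₁ ∈ Finset.range (p₁ + 1),
          ∑ q₂ ∈ Finset.range (p₂ + 1), (p₁.choose q₁ : ℝ) * (p₂.choose q₂ : ℝ)
            * (Dp f q₁ q₂ x z * Dp (gseq f k) (p₁ - q₁) (p₂ - q₂ + 1) x z)|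
        ≤ 2 ^ k * (k.factorial : ℝ) * ((k : ℝ) + 1) ^ (p₁ + p₂ + 1)
          + 2 ^ k * (k.factorial : ℝ) * ((k : ℝ) + 1) * ((k : ℝ) + 2) ^ (p₁ + p₂) :=
          le_trans (abs_add_le _ _) (add_le_add h1 hsum)
      _ ≤ 2 ^ (k + 1) * ((k + 1).factorial : ℝ) * ((k : ℝ) + 1 + 1) ^ (p₁ + p₂) := by
          have hmono : ((k : ℝ) + 1) ^ (p₁ + p₂) ≤ ((k : ℝ) + 2) ^ (p₁ + p₂) :=
            pow_le_pow_left₀ (by positivity) (by linarith) _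
          have hpos : (0 : ℝ) < 2 ^ k * (k.factorial : ℝ) * ((k : ℝ) + 1) := by positivity
          have e3 : ((k : ℝ) + 1 + 1) = (k : ℝ) + 2 := by ring
          rw [e3]
          push_cast [Nat.factorial_succ, pow_succ]
          nlinarith [mul_le_mul_of_nonneg_left hmono hpos.le]
    -- done

lemma Dpf_lip {β : ℕ} {f : ℝ → ℝ → ℝ} {X Z : Set ℝ} (hX : Convex ℝ X) (hZ : Convex ℝ Z)
    (hf : ContDiff ℝ (β : WithTop ℕ∞) (Function.uncurry f))
    (hbd : ∀ p₁ p₂ : ℕ, p₁ + p₂ ≤ β → ∀ x ∈ X, ∀ z ∈ Z, |Dp f p₁ p₂ x z| ≤ 1)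
    (hlip : ∀ p₁ p₂ : ℕ, p₁ + p₂ = β → ∀ x ∈ X, ∀ x' ∈ X, ∀ z ∈ Z, ∀ z' ∈ Z,
      |Dp f p₁ p₂ x z - Dp f p₁ p₂ x' z'| ≤ max |x - x'| |z - z'|) :
    ∀ q₁ q₂ : ℕ, q₁ + q₂ ≤ β → ∀ x ∈ X, ∀ x' ∈ X, ∀ z ∈ Z, ∀ z' ∈ Z,
      |Dp f q₁ q₂ x z - Dp f q₁ q₂ x' z'| ≤ 2 * max |x - x'| |z - z'| := by
  intro q₁ q₂ hq x hx x' hx' z hz z' hz'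
  have hD : (0 : ℝ) ≤ max |x - x'| |z - z'| :=
    le_trans (abs_nonneg _) (le_max_left _ _)
  rcases eq_or_lt_of_le hq with heq | hlt
  · have := hlip q₁ q₂ heq x hx x' hx' z hz z' hz'
    linarith
  · have hw : ContDiff ℝ (1 : WithTop ℕ∞) (Function.uncurry (Dp f q₁ q₂)) := by
      have := contDiff_uncurry_Dp (n := 1) (p₁ := q₁) (p₂ := q₂)
        (hf.of_le (by exact_mod_cast (by omega : 1 + q₁ + q₂ ≤ β)))
      exact_mod_cast this
    have hMx : ∀ u ∈ X, ∀ w ∈ Z, |Dx (Dp f q₁ q₂) u w| ≤ 1 := by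
      intro u hu w hw'
      rw [Dx_Dp]
      exact hbd (q₁ + 1) q₂ (by omega) u hu w hw'
    have hMz : ∀ u ∈ X, ∀ w ∈ Z, |Dz (Dp f q₁ q₂) u w| ≤ 1 := by
      intro u hu w hw'
      rw [Dz_Dp (hf.of_le (by exact_mod_cast (by omega : q₁ + 1 + q₂ ≤ β)))]
      exact hbd q₁ (q₂ + 1) (by omega) u hu w hw'
    have := lip_of_partials hX hZ hw hMx hMz hx hx' hz hz'
    linarith

lemma gseq_lip_low {β : ℕ} {f : ℝ → ℝ → ℝ} {X Z : Set ℝ} (hX : Convex ℝ X) (hZ : Convex ℝ Z)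
    (hf : ContDiff ℝ (β : WithTop ℕ∞) (Function.uncurry f))
    (hbd : ∀ p₁ p₂ : ℕ, p₁ + p₂ ≤ β → ∀ x ∈ X, ∀ z ∈ Z, |Dp f p₁ p₂ x z| ≤ 1)
    {k : ℕ} (hk : k ≤ β) {p₁ p₂ : ℕ} (hp : p₁ + p₂ + 1 ≤ β - k)
    {x x' z z' : ℝ} (hx : x ∈ X) (hx' : x' ∈ X) (hz : z ∈ Z) (hz' : z' ∈ Z) :
    |Dp (gseq f k) p₁ p₂ x z - Dp (gseq f k) p₁ p₂ x' z'|
      ≤ 2 ^ (k + 1) * (k.factorial : ℝ) * ((k : ℝ) + 1) ^ (p₁ + p₂ + 1)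
        * max |x - x'| |z - z'| := by
  have hg := gseq_contDiff hf hk
  have hw : ContDiff ℝ (1 : WithTop ℕ∞) (Function.uncurry (Dp (gseq f k) p₁ p₂)) := by
    have := contDiff_uncurry_Dp (n := 1) (p₁ := p₁) (p₂ := p₂)
      (hg.of_le (by exact_mod_cast (by omega : 1 + p₁ + p₂ ≤ β - k)))
    exact_mod_cast this
  have hMx : ∀ u ∈ X, ∀ w ∈ Z, |Dx (Dp (gseq f k) p₁ p₂) u w|
      ≤ 2 ^ k * (k.factorial : ℝ) * ((k : ℝ) + 1) ^ (p₁ + p₂ + 1) := by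
    intro u hu w hw'
    rw [Dx_Dp]
    have := gseq_bound hf hbd k hk (p₁ + 1) p₂ (by omega) u hu w hw'
    rwa [show p₁ + 1 + p₂ = p₁ + p₂ + 1 from by omega] at this
  have hMz : ∀ u ∈ X, ∀ w ∈ Z, |Dz (Dp (gseq f k) p₁ p₂) u w|
      ≤ 2 ^ k * (k.factorial : ℝ) * ((k : ℝ) + 1) ^ (p₁ + p₂ + 1) := by
    intro u hu w hw'
    rw [Dz_Dp (hg.of_le (by exact_mod_cast (by omega : p₁ + 1 + p₂ ≤ β - k)))]
    exact gseq_bound hf hbd k hk p₁ (p₂ + 1) (by omega) u hu w hw'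
  have := lip_of_partials hX hZ hw hMx hMz hx hx' hz hz'
  calc |Dp (gseq f k) p₁ p₂ x z - Dp (gseq f k) p₁ p₂ x' z'|
      ≤ 2 * (2 ^ k * (k.factorial : ℝ) * ((k : ℝ) + 1) ^ (p₁ + p₂ + 1))
        * max |x - x'| |z - z'| := this
    _ = 2 ^ (k + 1) * (k.factorial : ℝ) * ((k : ℝ) + 1) ^ (p₁ + p₂ + 1)
        * max |x - x'| |z - z'| := by rw [pow_succ]; ring

lemma gseq_lip {β : ℕ} {f : ℝ → ℝ → ℝ} {X Z : Set ℝ} (hX : Convex ℝ X) (hZ : Convex ℝ Z)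
    (hf : ContDiff ℝ (β : WithTop ℕ∞) (Function.uncurry f))
    (hbd : ∀ p₁ p₂ : ℕ, p₁ + p₂ ≤ β → ∀ x ∈ X, ∀ z ∈ Z, |Dp f p₁ p₂ x z| ≤ 1)
    (hlip : ∀ p₁ p₂ : ℕ, p₁ + p₂ = β → ∀ x ∈ X, ∀ x' ∈ X, ∀ z ∈ Z, ∀ z' ∈ Z,
      |Dp f p₁ p₂ x z - Dp f p₁ p₂ x' z'| ≤ max |x - x'| |z - z'|) :
    ∀ k, k ≤ β → ∀ p₁ p₂, p₁ + p₂ ≤ β - k → ∀ x ∈ X, ∀ x' ∈ X, ∀ z ∈ Z, ∀ z' ∈ Z,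
      |Dp (gseq f k) p₁ p₂ x z - Dp (gseq f k) p₁ p₂ x' z'|
        ≤ 2 ^ (k + 1) * (k.factorial : ℝ) * ((k : ℝ) + 1) ^ (p₁ + p₂ + 1)
          * max |x - x'| |z - z'| := by
  intro k
  induction k with
  | zero =>
    intro _ p₁ p₂ hp x hx x' hx' z hz z' hz'
    by_cases hcase : p₁ + p₂ + 1 ≤ β
    · exact gseq_lip_low hX hZ hf hbd (Nat.zero_le β) (by omega) hx hx' hz hz'
    · have hj : p₁ + p₂ = β := by omega
      have hD : (0 : ℝ) ≤ max |x - x'| |z - z'| :=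
        le_trans (abs_nonneg _) (le_max_left _ _)
      have := hlip p₁ p₂ hj x hx x' hx' z hz z' hz'
      have hgoal : (2 : ℝ) ^ (0 + 1) * ((0 : ℕ).factorial : ℝ)
          * ((0 : ℕ) + 1 : ℝ) ^ (p₁ + p₂ + 1) = 2 := by norm_num
      calc |Dp (gseq f 0) p₁ p₂ x z - Dp (gseq f 0) p₁ p₂ x' z'|
          ≤ max |x - x'| |z - z'| := this
        _ ≤ 2 ^ (0 + 1) * ((0 : ℕ).factorial : ℝ) * ((0 : ℕ) + 1 : ℝ) ^ (p₁ + p₂ + 1)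
            * max |x - x'| |z - z'| := by rw [hgoal]; linarith
  | succ k ih =>
    intro hk p₁ p₂ hp x hx x' hx' z hz z' hz'
    by_cases hcase : p₁ + p₂ + 1 ≤ β - (k + 1)
    · exact gseq_lip_low hX hZ hf hbd hk hcase hx hx' hz hz'
    have hD : (0 : ℝ) ≤ max |x - x'| |z - z'| :=
      le_trans (abs_nonneg _) (le_max_left _ _)
    set D := max |x - x'| |z - z'| with hDdef
    rw [Dp_gseq_succ hf hk hp x z, Dp_gseq_succ hf hk hp x' z']
    have hA : |Dp (gseq f k) (p₁ + 1) p₂ x z - Dp (gseq f k) (p₁ + 1) p₂ x' z'|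
        ≤ 2 ^ (k + 1) * (k.factorial : ℝ) * ((k : ℝ) + 1) ^ (p₁ + p₂ + 2) * D := by
      have := ih (by omega) (p₁ + 1) p₂ (by omega) x hx x' hx' z hz z' hz'
      rwa [show p₁ + 1 + p₂ + 1 = p₁ + p₂ + 2 from by omega] at this
    have hterm : ∀ q₁ ∈ Finset.range (p₁ + 1), ∀ q₂ ∈ Finset.range (p₂ + 1),
        |(p₁.choose q₁ : ℝ) * (p₂.choose q₂ : ℝ)
            * (Dp f q₁ q₂ x z * Dp (gseq f k) (p₁ - q₁) (p₂ - q₂ + 1) x z)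
          - (p₁.choose q₁ : ℝ) * (p₂.choose q₂ : ℝ)
            * (Dp f q₁ q₂ x' z' * Dp (gseq f k) (p₁ - q₁) (p₂ - q₂ + 1) x' z')|
        ≤ (p₁.choose q₁ : ℝ) * (p₂.choose q₂ : ℝ)
          * (2 ^ (k + 1) * (k.factorial : ℝ) * ((k : ℝ) + 2)
            * ((k : ℝ) + 1) ^ ((p₁ - q₁) + (p₂ - q₂) + 1)) * D := by
      intro q₁ hq₁ q₂ hq₂
      rw [Finset.mem_range] at hq₁ hq₂
      set u := Dp f q₁ q₂ x z
      set u' := Dp f q₁ q₂ x' z'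
      set v := Dp (gseq f k) (p₁ - q₁) (p₂ - q₂ + 1) x z
      set v' := Dp (gseq f k) (p₁ - q₁) (p₂ - q₂ + 1) x' z'
      have hu : |u| ≤ 1 := hbd q₁ q₂ (by omega) x hx z hz
      have huu : |u - u'| ≤ 2 * D := Dpf_lip hX hZ hf hbd hlip q₁ q₂ (by omega)
        x hx x' hx' z hz z' hz'
      have hvv : |v - v'| ≤ 2 ^ (k + 1) * (k.factorial : ℝ)
          * ((k : ℝ) + 1) ^ ((p₁ - q₁) + (p₂ - q₂) + 2) * D := by
        have := ih (by omega) (p₁ - q₁) (p₂ - q₂ + 1) (by omega) x hx x' hx' z hz z' hz'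
        rwa [show (p₁ - q₁) + (p₂ - q₂ + 1) + 1 = (p₁ - q₁) + (p₂ - q₂) + 2 from by omega]
          at this
      have hv' : |v'| ≤ 2 ^ k * (k.factorial : ℝ)
          * ((k : ℝ) + 1) ^ ((p₁ - q₁) + (p₂ - q₂) + 1) := by
        have := gseq_bound hf hbd k (by omega) (p₁ - q₁) (p₂ - q₂ + 1) (by omega) x' hx' z' hz'
        rwa [show (p₁ - q₁) + (p₂ - q₂ + 1) = (p₁ - q₁) + (p₂ - q₂) + 1 from by omega] at this
      have hsplit : u * v - u' * v' = u * (v - v') + v' * (u - u') := by ring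
      have hbound : |u * v - u' * v'|
          ≤ 2 ^ (k + 1) * (k.factorial : ℝ) * ((k : ℝ) + 2)
            * ((k : ℝ) + 1) ^ ((p₁ - q₁) + (p₂ - q₂) + 1) * D := by
        rw [hsplit]
        have h1 : |u * (v - v')| ≤ 2 ^ (k + 1) * (k.factorial : ℝ)
            * ((k : ℝ) + 1) ^ ((p₁ - q₁) + (p₂ - q₂) + 2) * D := by
          rw [abs_mul]
          calc |u| * |v - v'| ≤ 1 * (2 ^ (k + 1) * (k.factorial : ℝ)
              * ((k : ℝ) + 1) ^ ((p₁ - q₁) + (p₂ - q₂) + 2) * D) :=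
                mul_le_mul hu hvv (abs_nonneg _) (by norm_num)
            _ = _ := one_mul _
        have h2 : |v' * (u - u')| ≤ 2 ^ k * (k.factorial : ℝ)
            * ((k : ℝ) + 1) ^ ((p₁ - q₁) + (p₂ - q₂) + 1) * (2 * D) := by
          rw [abs_mul]
          exact mul_le_mul hv' huu (abs_nonneg _) (by positivity)
        calc |u * (v - v') + v' * (u - u')| ≤ |u * (v - v')| + |v' * (u - u')| := abs_add_le _ _
          _ ≤ 2 ^ (k + 1) * (k.factorial : ℝ)
                * ((k : ℝ) + 1) ^ ((p₁ - q₁) + (p₂ - q₂) + 2) * D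
              + 2 ^ k * (k.factorial : ℝ)
                * ((k : ℝ) + 1) ^ ((p₁ - q₁) + (p₂ - q₂) + 1) * (2 * D) := add_le_add h1 h2
          _ = 2 ^ (k + 1) * (k.factorial : ℝ) * ((k : ℝ) + 2)
                * ((k : ℝ) + 1) ^ ((p₁ - q₁) + (p₂ - q₂) + 1) * D := by
              rw [pow_succ ((k : ℝ) + 1) ((p₁ - q₁) + (p₂ - q₂) + 1), pow_succ (2 : ℝ) k]
              ring
      calc |(p₁.choose q₁ : ℝ) * (p₂.choose q₂ : ℝ) * (u * v)
            - (p₁.choose q₁ : ℝ) * (p₂.choose q₂ : ℝ) * (u' * v')|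
          = (p₁.choose q₁ : ℝ) * (p₂.choose q₂ : ℝ) * |u * v - u' * v'| := by
            rw [← mul_sub, abs_mul, abs_mul, Nat.abs_cast, Nat.abs_cast]
        _ ≤ (p₁.choose q₁ : ℝ) * (p₂.choose q₂ : ℝ)
            * (2 ^ (k + 1) * (k.factorial : ℝ) * ((k : ℝ) + 2)
              * ((k : ℝ) + 1) ^ ((p₁ - q₁) + (p₂ - q₂) + 1) * D) :=
            mul_le_mul_of_nonneg_left hbound (by positivity)
        _ = _ := by ring
    -- assemble
    have hsumdiff : (∑ q₁ ∈ Finset.range (p₁ + 1), ∑ q₂ ∈ Finset.range (p₂ + 1),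
          (p₁.choose q₁ : ℝ) * (p₂.choose q₂ : ℝ)
            * (Dp f q₁ q₂ x z * Dp (gseq f k) (p₁ - q₁) (p₂ - q₂ + 1) x z))
        - (∑ q₁ ∈ Finset.range (p₁ + 1), ∑ q₂ ∈ Finset.range (p₂ + 1),
          (p₁.choose q₁ : ℝ) * (p₂.choose q₂ : ℝ)
            * (Dp f q₁ q₂ x' z' * Dp (gseq f k) (p₁ - q₁) (p₂ - q₂ + 1) x' z'))
        = ∑ q₁ ∈ Finset.range (p₁ + 1), ∑ q₂ ∈ Finset.range (p₂ + 1),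
          ((p₁.choose q₁ : ℝ) * (p₂.choose q₂ : ℝ)
            * (Dp f q₁ q₂ x z * Dp (gseq f k) (p₁ - q₁) (p₂ - q₂ + 1) x z)
          - (p₁.choose q₁ : ℝ) * (p₂.choose q₂ : ℝ)
            * (Dp f q₁ q₂ x' z' * Dp (gseq f k) (p₁ - q₁) (p₂ - q₂ + 1) x' z')) := by
      rw [← Finset.sum_sub_distrib]
      exact Finset.sum_congr rfl fun q₁ _ => (Finset.sum_sub_distrib _ _).symm
    have hsum : |(∑ q₁ ∈ Finset.range (p₁ + 1), ∑ q₂ ∈ Finset.range (p₂ + 1),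
          (p₁.choose q₁ : ℝ) * (p₂.choose q₂ : ℝ)
            * (Dp f q₁ q₂ x z * Dp (gseq f k) (p₁ - q₁) (p₂ - q₂ + 1) x z))
        - (∑ q₁ ∈ Finset.range (p₁ + 1), ∑ q₂ ∈ Finset.range (p₂ + 1),
          (p₁.choose q₁ : ℝ) * (p₂.choose q₂ : ℝ)
            * (Dp f q₁ q₂ x' z' * Dp (gseq f k) (p₁ - q₁) (p₂ - q₂ + 1) x' z'))|
        ≤ 2 ^ (k + 1) * (k.factorial : ℝ) * ((k : ℝ) + 2) * ((k : ℝ) + 1)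
          * ((k : ℝ) + 2) ^ (p₁ + p₂) * D := by
      rw [hsumdiff]
      have habs := le_trans (Finset.abs_sum_le_sum_abs _ _)
        (Finset.sum_le_sum fun q₁ (hq₁ : q₁ ∈ Finset.range (p₁ + 1)) =>
          le_trans (Finset.abs_sum_le_sum_abs _ _)
            (Finset.sum_le_sum fun q₂ hq₂ => hterm q₁ hq₁ q₂ hq₂))
      refine le_trans habs (le_of_eq ?_)
      have hrw : ∀ q₁ ∈ Finset.range (p₁ + 1), ∀ q₂ ∈ Finset.range (p₂ + 1),
          (p₁.choose q₁ : ℝ) * (p₂.choose q₂ : ℝ)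
            * (2 ^ (k + 1) * (k.factorial : ℝ) * ((k : ℝ) + 2)
              * ((k : ℝ) + 1) ^ ((p₁ - q₁) + (p₂ - q₂) + 1)) * D
          = (2 ^ (k + 1) * (k.factorial : ℝ) * ((k : ℝ) + 2) * ((k : ℝ) + 1) * D)
            * ((p₁.choose q₁ : ℝ) * (p₂.choose q₂ : ℝ)
              * ((k : ℝ) + 1) ^ ((p₁ - q₁) + (p₂ - q₂))) := by
        intro q₁ _ q₂ _
        rw [pow_succ]
        ring
      rw [Finset.sum_congr rfl fun q₁ hq₁ => Finset.sum_congr rfl fun q₂ hq₂ =>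
        hrw q₁ hq₁ q₂ hq₂]
      simp only [← Finset.mul_sum]
      rw [binom_sum2 p₁ p₂ ((k : ℝ) + 1),
        show (1 : ℝ) + ((k : ℝ) + 1) = (k : ℝ) + 2 from by ring]
      ring
    calc |(Dp (gseq f k) (p₁ + 1) p₂ x z + ∑ q₁ ∈ Finset.range (p₁ + 1),
            ∑ q₂ ∈ Finset.range (p₂ + 1), (p₁.choose q₁ : ℝ) * (p₂.choose q₂ : ℝ)
              * (Dp f q₁ q₂ x z * Dp (gseq f k) (p₁ - q₁) (p₂ - q₂ + 1) x z))
          - (Dp (gseq f k) (p₁ + 1) p₂ x' z' + ∑ q₁ ∈ Finset.range (p₁ + 1),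
            ∑ q₂ ∈ Finset.range (p₂ + 1), (p₁.choose q₁ : ℝ) * (p₂.choose q₂ : ℝ)
              * (Dp f q₁ q₂ x' z' * Dp (gseq f k) (p₁ - q₁) (p₂ - q₂ + 1) x' z'))|
        ≤ 2 ^ (k + 1) * (k.factorial : ℝ) * ((k : ℝ) + 1) ^ (p₁ + p₂ + 2) * D
          + 2 ^ (k + 1) * (k.factorial : ℝ) * ((k : ℝ) + 2) * ((k : ℝ) + 1)
            * ((k : ℝ) + 2) ^ (p₁ + p₂) * D := by
          have hre : (Dp (gseq f k) (p₁ + 1) p₂ x z + ∑ q₁ ∈ Finset.range (p₁ + 1),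
              ∑ q₂ ∈ Finset.range (p₂ + 1), (p₁.choose q₁ : ℝ) * (p₂.choose q₂ : ℝ)
                * (Dp f q₁ q₂ x z * Dp (gseq f k) (p₁ - q₁) (p₂ - q₂ + 1) x z))
            - (Dp (gseq f k) (p₁ + 1) p₂ x' z' + ∑ q₁ ∈ Finset.range (p₁ + 1),
              ∑ q₂ ∈ Finset.range (p₂ + 1), (p₁.choose q₁ : ℝ) * (p₂.choose q₂ : ℝ)
                * (Dp f q₁ q₂ x' z' * Dp (gseq f k) (p₁ - q₁) (p₂ - q₂ + 1) x' z'))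
            = (Dp (gseq f k) (p₁ + 1) p₂ x z - Dp (gseq f k) (p₁ + 1) p₂ x' z')
              + ((∑ q₁ ∈ Finset.range (p₁ + 1), ∑ q₂ ∈ Finset.range (p₂ + 1),
                (p₁.choose q₁ : ℝ) * (p₂.choose q₂ : ℝ)
                  * (Dp f q₁ q₂ x z * Dp (gseq f k) (p₁ - q₁) (p₂ - q₂ + 1) x z))
              - (∑ q₁ ∈ Finset.range (p₁ + 1), ∑ q₂ ∈ Finset.range (p₂ + 1),
                (p₁.choose q₁ : ℝ) * (p₂.choose q₂ : ℝ)
                  * (Dp f q₁ q₂ x' z' * Dp (gseq f k) (p₁ - q₁) (p₂ - q₂ + 1) x' z'))) := by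
            ring
          rw [hre]
          exact le_trans (abs_add_le _ _) (add_le_add hA hsum)
      _ ≤ 2 ^ (k + 1 + 1) * ((k + 1).factorial : ℝ) * (((k + 1) : ℕ) + 1 : ℝ) ^ (p₁ + p₂ + 1)
            * D := by
          have hmono : ((k : ℝ) + 1) ^ (p₁ + p₂ + 1) ≤ ((k : ℝ) + 2) ^ (p₁ + p₂ + 1) :=
            pow_le_pow_left₀ (by positivity) (by linarith) _
          have hpos : (0 : ℝ) < 2 ^ (k + 1) * (k.factorial : ℝ) * ((k : ℝ) + 1) := by positivity
          have e0 : (((k + 1) : ℕ) + 1 : ℝ) = (k : ℝ) + 2 := by push_cast; ring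
          rw [e0]
          have e1 : ((k + 1).factorial : ℝ) = ((k : ℝ) + 1) * (k.factorial : ℝ) := by
            rw [Nat.factorial_succ]; push_cast; ring
          rw [e1]
          have key : 2 ^ (k + 1) * (k.factorial : ℝ) * ((k : ℝ) + 1) ^ (p₁ + p₂ + 2)
              + 2 ^ (k + 1) * (k.factorial : ℝ) * ((k : ℝ) + 2) * ((k : ℝ) + 1)
                * ((k : ℝ) + 2) ^ (p₁ + p₂)
              ≤ 2 ^ (k + 1 + 1) * (((k : ℝ) + 1) * (k.factorial : ℝ))
                * ((k : ℝ) + 2) ^ (p₁ + p₂ + 1) := by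
            have e2 : ((k : ℝ) + 1) ^ (p₁ + p₂ + 2)
                = ((k : ℝ) + 1) ^ (p₁ + p₂ + 1) * ((k : ℝ) + 1) := by rw [pow_succ]
            have e3 : ((k : ℝ) + 2) ^ (p₁ + p₂ + 1)
                = ((k : ℝ) + 2) ^ (p₁ + p₂) * ((k : ℝ) + 2) := by rw [pow_succ]
            rw [e2, e3, pow_succ (2 : ℝ) (k + 1)]
            nlinarith [mul_le_mul_of_nonneg_left hmono hpos.le,
              pow_nonneg (by positivity : (0:ℝ) ≤ (k : ℝ) + 2) (p₁ + p₂)]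
          nlinarith [key, hD, mul_le_mul_of_nonneg_right key hD]

lemma ysol {β : ℕ} {f : ℝ → ℝ → ℝ} {y : ℝ → ℝ} {s : Set ℝ}
    (hs : UniqueDiffOn ℝ s)
    (hf : ContDiff ℝ (β : WithTop ℕ∞) (Function.uncurry f))
    (hode : ∀ x ∈ s, HasDerivAt y (f x (y x)) x) :
    ∀ k, k ≤ β → ∀ x ∈ s, iteratedDerivWithin (k + 1) y s x = gseq f k x (y x) := by
  intro k
  induction k with
  | zero =>
    intro _ x hx
    rw [iteratedDerivWithin_one]
    exact (hode x hx).hasDerivWithinAt.derivWithin (hs x hx)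
  | succ k ih =>
    intro hk x hx
    rw [iteratedDerivWithin_succ]
    have hEq : Set.EqOn (iteratedDerivWithin (k + 1) y s) (fun t => gseq f k t (y t)) s :=
      fun t ht => ih (by omega) t ht
    rw [derivWithin_congr hEq (hEq hx)]
    -- the composition has a full derivative at x
    have hg : ContDiff ℝ ((β - k : ℕ) : WithTop ℕ∞) (Function.uncurry (gseq f k)) :=
      gseq_contDiff hf (by omega)
    have hgd : Differentiable ℝ (Function.uncurry (gseq f k)) :=
      hg.differentiable (by exact_mod_cast (by omega : β - k ≠ 0))
    have hcurve : HasDerivAt (fun t : ℝ => (t, y t)) ((1 : ℝ), f x (y x)) x :=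
      (hasDerivAt_id x).prodMk (hode x hx)
    have hcomp : HasDerivAt (fun t => gseq f k t (y t))
        (fderiv ℝ (Function.uncurry (gseq f k)) (x, y x) (1, f x (y x))) x :=
      by have := (hgd (x, y x)).hasFDerivAt.comp_hasDerivAt x hcurve; exact this
    have hval : fderiv ℝ (Function.uncurry (gseq f k)) (x, y x) (1, f x (y x))
        = gseq f (k + 1) x (y x) := by
      have hsplit : ((1 : ℝ), f x (y x)) = ((1 : ℝ), (0 : ℝ)) + f x (y x) • ((0 : ℝ), (1 : ℝ)) := by
        simp [Prod.ext_iff]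
      rw [hsplit, map_add, map_smul, ← Dx_eq_fderiv (hgd (x, y x)), ← Dz_eq_fderiv (hgd (x, y x))]
      show Dx (gseq f k) x (y x) + f x (y x) * Dz (gseq f k) x (y x) = _
      rfl
    rw [← hval]
    exact hcomp.hasDerivWithinAt.derivWithin (hs x hx)


theorem nonautonomous_top_derivative_lipschitz
    (β : ℕ) (f : ℝ → ℝ → ℝ) (y : ℝ → ℝ) (x₀ y₀ a b : ℝ) (ha : 0 < a) (hb : 0 < b)
    (hf : ContDiff ℝ (β : ℕ∞) (Function.uncurry f))
    (hcont : ContinuousOn (Function.uncurry f) (Icc (x₀ - a) (x₀ + a) ×ˢ Icc (y₀ - b) (y₀ + b)))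
    (hbd : ∀ p₁ p₂ : ℕ, p₁ + p₂ ≤ β → ∀ x ∈ Icc (x₀ - a) (x₀ + a),
      ∀ z ∈ Icc (y₀ - b) (y₀ + b), |Dp f p₁ p₂ x z| ≤ 1)
    (hlip : ∀ p₁ p₂ : ℕ, p₁ + p₂ = β → ∀ x ∈ Icc (x₀ - a) (x₀ + a),
      ∀ x' ∈ Icc (x₀ - a) (x₀ + a), ∀ z ∈ Icc (y₀ - b) (y₀ + b), ∀ z' ∈ Icc (y₀ - b) (y₀ + b),
      |Dp f p₁ p₂ x z - Dp f p₁ p₂ x' z'| ≤ max |x - x'| |z - z'|)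
    (hy0 : y x₀ = y₀)
    (hode : ∀ x ∈ Icc (x₀ - a) (x₀ + a), HasDerivAt y (f x (y x)) x)
    (htraj : ∀ x ∈ Icc (x₀ - a) (x₀ + a), y x ∈ Icc (y₀ - b) (y₀ + b)) :
    ∀ x ∈ Icc (x₀ - min a b) (x₀ + min a b), ∀ x' ∈ Icc (x₀ - min a b) (x₀ + min a b),
      |iteratedDerivWithin (β + 1) y (Icc (x₀ - a) (x₀ + a)) x -
        iteratedDerivWithin (β + 1) y (Icc (x₀ - a) (x₀ + a)) x'| ≤
      2 ^ (β + 1) * (β + 1).factorial * |x - x'| := by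
  intro x hx x' hx'
  have hf' : ContDiff ℝ ((β : ℕ) : WithTop ℕ∞) (Function.uncurry f) := by exact_mod_cast hf
  set X := Icc (x₀ - a) (x₀ + a) with hXdef
  set Z := Icc (y₀ - b) (y₀ + b) with hZdef
  have hsub : Icc (x₀ - min a b) (x₀ + min a b) ⊆ X := by
    apply Icc_subset_Icc
    · have : min a b ≤ a := min_le_left a b
      linarith
    · have : min a b ≤ a := min_le_left a b
      linarith
  have hx1 : x ∈ X := hsub hx
  have hx1' : x' ∈ X := hsub hx'
  have hzx : y x ∈ Z := htraj x hx1
  have hzx' : y x' ∈ Z := htraj x' hx1'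
  have hUD : UniqueDiffOn ℝ X := uniqueDiffOn_Icc (by linarith)
  -- rewrite the iterated derivatives
  rw [ysol hUD hf' hode β le_rfl x hx1, ysol hUD hf' hode β le_rfl x' hx1']
  -- y is 1-Lipschitz on X
  have hy_lip : |y x - y x'| ≤ |x - x'| := by
    have hbd1 : ∀ t ∈ X, ‖f t (y t)‖ ≤ 1 := by
      intro t ht
      have := hbd 0 0 (by omega) t ht (y t) (htraj t ht)
      rw [Dp_zero_zero] at this
      exact this
    have := Convex.norm_image_sub_le_of_norm_hasDerivWithin_le
      (f := y) (f' := fun t => f t (y t)) (C := 1)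
      (fun t ht => (hode t ht).hasDerivWithinAt) hbd1 (convex_Icc _ _) hx1' hx1
    simpa using this
  -- apply the Lipschitz estimate for gseq f β
  have hmain := gseq_lip (convex_Icc (x₀ - a) (x₀ + a)) (convex_Icc (y₀ - b) (y₀ + b))
    hf' hbd hlip β le_rfl 0 0 (by omega) x hx1 x' hx1' (y x) hzx (y x') hzx'
  rw [Dp_zero_zero] at hmain
  have hmax : max |x - x'| |y x - y x'| = |x - x'| := max_eq_left hy_lip
  rw [hmax] at hmain
  calc |gseq f β x (y x) - gseq f β x' (y x')|
      ≤ 2 ^ (β + 1) * (β.factorial : ℝ) * ((β : ℝ) + 1) ^ (0 + 0 + 1) * |x - x'| := hmain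
    _ = 2 ^ (β + 1) * ((β + 1).factorial : ℝ) * |x - x'| := by
        rw [Nat.factorial_succ]
        push_cast
        ring
end

section
/- Let y solve y'(x) = f(y(x)). Then for every 1 ≤ k ≤ β+1 (where f is β-times differentiable), the k-th derivative of y admits the representation y^(k)(x) = Σ_{i=1}^{(k-1)!} f^(a₁ⁱ)(y(x)) · f^(a₂ⁱ)(y(x)) · ⋯ · f^(a_kⁱ)(y(x)), where for each i the non-negative integer exponents satisfy a₁ⁱ + ⋯ + a_kⁱ = k - 1. In particular, y^(k) is a sum of exactly (k-1)! products, each product having k factors that are derivatives of f of total order k-1 evaluated at y(x). -/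
private lemma aux_rep (β : ℕ) (f y : ℝ → ℝ) (hf : ContDiff ℝ (β : ℕ∞) f)
    (hode : ∀ x : ℝ, HasDerivAt y (f (y x)) x) :
    ∀ m : ℕ, m ≤ β →
      ∃ a : Fin m.factorial → Fin (m + 1) → ℕ,
        (∀ i, (∑ j, a i j) = m) ∧
        ∀ x : ℝ, iteratedDeriv (m + 1) y x = ∑ i, ∏ j, iteratedDeriv (a i j) f (y x) := by
  intro m
  induction m with
  | zero =>
    intro _
    refine ⟨fun _ _ => 0, fun i => by simp, fun x => ?_⟩
    show iteratedDeriv 1 y x = ∑ i : Fin 1, ∏ j : Fin 1, iteratedDeriv 0 f (y x)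
    simp [iteratedDeriv_one, (hode x).deriv]
  | succ m ih =>
    intro hm
    obtain ⟨a, hsum, heq⟩ := ih (Nat.le_of_succ_le hm)
    have hbound : ∀ i j, a i j ≤ m := by
      intro i j
      calc a i j ≤ ∑ j', a i j' :=
            Finset.single_le_sum (fun _ _ => Nat.zero_le _) (Finset.mem_univ j)
        _ = m := hsum i
    have hfac : ∀ (x : ℝ) (i : Fin m.factorial) (j : Fin (m + 1)),
        HasDerivAt (fun x => iteratedDeriv (a i j) f (y x))
          (iteratedDeriv (a i j + 1) f (y x) * f (y x)) x := by
      intro x i j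
      have hlt : ((a i j : ℕ) : WithTop ℕ∞) < (β : ℕ∞) := by
        have : a i j < β := lt_of_le_of_lt (hbound i j) hm
        exact_mod_cast this
      have hdiff : Differentiable ℝ (iteratedDeriv (a i j) f) :=
        hf.differentiable_iteratedDeriv _ hlt
      have h1 : HasDerivAt (iteratedDeriv (a i j) f)
          (iteratedDeriv (a i j + 1) f (y x)) (y x) := by
        rw [iteratedDeriv_succ]
        exact (hdiff (y x)).hasDerivAt
      exact h1.comp x (hode x)
    have hD : ∀ x : ℝ,
        HasDerivAt (fun x => ∑ i, ∏ j, iteratedDeriv (a i j) f (y x))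
          (∑ i, ∑ j0, (∏ j ∈ Finset.univ.erase j0, iteratedDeriv (a i j) f (y x)) *
            (iteratedDeriv (a i j0 + 1) f (y x) * f (y x))) x := by
      intro x
      refine HasDerivAt.fun_sum fun i _ => ?_
      have := HasDerivAt.fun_finsetProd (u := Finset.univ)
        (f := fun j x => iteratedDeriv (a i j) f (y x))
        (f' := fun j => iteratedDeriv (a i j + 1) f (y x) * f (y x))
        (fun j _ => hfac x i j)
      simpa [smul_eq_mul] using this
    have key : ∀ (i : Fin m.factorial) (j0 : Fin (m + 1)) (x : ℝ),
        (∏ j : Fin (m + 2),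
          iteratedDeriv ((Fin.snoc (fun j => a i j + if j = j0 then 1 else 0) 0 : Fin (m + 2) → ℕ) j) f (y x))
        = (∏ j ∈ Finset.univ.erase j0, iteratedDeriv (a i j) f (y x)) *
            (iteratedDeriv (a i j0 + 1) f (y x) * f (y x)) := by
      intro i j0 x
      rw [Fin.prod_univ_castSucc]
      simp only [Fin.snoc_castSucc, Fin.snoc_last, iteratedDeriv_zero]
      rw [← Finset.mul_prod_erase Finset.univ _ (Finset.mem_univ j0), if_pos rfl]
      have hprod : (∏ j ∈ Finset.univ.erase j0,
            iteratedDeriv (a i j + if j = j0 then 1 else 0) f (y x)) =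
          ∏ j ∈ Finset.univ.erase j0, iteratedDeriv (a i j) f (y x) :=
        Finset.prod_congr rfl fun j hj => by
          rw [if_neg (Finset.ne_of_mem_erase hj), Nat.add_zero]
      rw [hprod]
      ring
    let e : Fin (m + 1).factorial ≃ Fin (m + 1) × Fin m.factorial :=
      (finCongr (Nat.factorial_succ m)).trans finProdFinEquiv.symm
    refine ⟨fun p => Fin.snoc (fun j => a (e p).2 j + if j = (e p).1 then 1 else 0) 0, ?_, ?_⟩
    · intro p
      rw [Fin.sum_univ_castSucc]
      simp [Fin.snoc_castSucc, Fin.snoc_last, Finset.sum_add_distrib, hsum]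
    · intro x
      have hy : iteratedDeriv (m + 1) y = fun x => ∑ i, ∏ j, iteratedDeriv (a i j) f (y x) :=
        funext heq
      rw [iteratedDeriv_succ, hy, (hD x).deriv]
      symm
      rw [Fintype.sum_equiv e
        (fun p => ∏ j : Fin (m + 2), iteratedDeriv
          ((Fin.snoc (fun j => a (e p).2 j + if j = (e p).1 then 1 else 0) 0 : Fin (m + 2) → ℕ) j) f (y x))
        (fun q => ∏ j : Fin (m + 2), iteratedDeriv
          ((Fin.snoc (fun j => a q.2 j + if j = q.1 then 1 else 0) 0 : Fin (m + 2) → ℕ) j) f (y x))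
        (fun p => rfl)]
      rw [Fintype.sum_prod_type, Finset.sum_comm]
      exact Finset.sum_congr rfl fun i _ => Finset.sum_congr rfl fun j0 _ => key i j0 x

/-- Representation of the derivatives of a solution of the autonomous ODE `y' = f (y)`:
`y^(k)` is a sum of exactly `(k-1)!` products of `k` derivatives of `f` (composed with `y`)
whose orders sum to `k - 1`. -/
theorem autonomous_derivative_representation
    (β : ℕ) (f y : ℝ → ℝ) (hf : ContDiff ℝ (β : ℕ∞) f)
    (hode : ∀ x : ℝ, HasDerivAt y (f (y x)) x) :
    ∀ k, 1 ≤ k → k ≤ β + 1 →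
      ∃ a : Fin (k - 1).factorial → Fin k → ℕ,
        (∀ i, (∑ j, a i j) = k - 1) ∧
        ∀ x : ℝ, iteratedDeriv k y x = ∑ i, ∏ j, iteratedDeriv (a i j) f (y x) := by
  intro k hk1 hk2
  obtain ⟨m, rfl⟩ : ∃ m, k = m + 1 := ⟨k - 1, (Nat.succ_pred_eq_of_pos hk1).symm⟩
  simp only [Nat.add_sub_cancel]
  exact aux_rep β f y hf hode m (by omega)
end

section
/- (Taylor-remainder chaining step) Let h, g be (γ+1)-times differentiable on (0,α) with |h^(γ+1)(u) - h^(γ+1)(v)| ≤ (γ+1)!·2^{γ+1}|u-v| (and similarly for g), and suppose |h^(k)(x) - g^(k)(x)| ≤ δ_k for k = 0,…,γ+1 at a point x, where δ_k = (δ/5)^{1 - k/(γ+2)}. Then for any Δ with |Δ| ≤ (1/2)(δ/5)^{1/(γ+2)} and x+Δ ∈ (0,α), we have |h(x+Δ) - g(x+Δ)| ≤ δ. -/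
open Set


/-- Iterated derivative within a smaller set agrees with that on a larger set,
given smoothness on the larger set and unique differentiability on both. -/
lemma iterDW_subset {f : ℝ → ℝ} {s t : Set ℝ} {N : ℕ∞}
    (hf : ContDiffOn ℝ N f t) (hst : s ⊆ t) (hs : UniqueDiffOn ℝ s)
    (ht : UniqueDiffOn ℝ t) {m : ℕ} (hm : (m : ℕ∞) ≤ N) {x : ℝ} (hx : x ∈ s) :
    iteratedDerivWithin m f s x = iteratedDerivWithin m f t x := by
  have H := ((hf.ftaylorSeriesWithin ht).mono hst).eq_iteratedFDerivWithin_of_uniqueDiffOn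
    (by exact_mod_cast hm) hs hx
  rw [iteratedDerivWithin_eq_iteratedFDerivWithin, iteratedDerivWithin_eq_iteratedFDerivWithin,
    ← H]
  rfl

/-- On an open set, the iterated derivative within equals the global one. -/
lemma iterDW_isOpen {f : ℝ → ℝ} {s : Set ℝ} (hs : IsOpen s) (m : ℕ) {x : ℝ} (hx : x ∈ s) :
    iteratedDerivWithin m f s x = iteratedDeriv m f x := by
  rw [iteratedDerivWithin_eq_iteratedFDerivWithin, iteratedDeriv_eq_iteratedFDeriv,
    iteratedFDerivWithin_of_isOpen m hs hx]

/-- Lagrange form of Taylor's theorem relative to an ambient set with unique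
differentiability. -/
lemma taylor_lagrange_set {f : ℝ → ℝ} {s : Set ℝ} {n : ℕ} {a b : ℝ} (hab : a < b)
    (hs : UniqueDiffOn ℝ s) (hIcc : Icc a b ⊆ s)
    (hf : ContDiffOn ℝ ((n : ℕ∞) + 1) f s) :
    ∃ x' ∈ Ioo a b, f b = (∑ k ∈ Finset.range (n + 1),
        ((k.factorial : ℝ))⁻¹ * (b - a) ^ k * iteratedDerivWithin k f s a) +
      iteratedDerivWithin (n + 1) f s x' * (b - a) ^ (n + 1) / (n + 1).factorial := by
  have huI : UniqueDiffOn ℝ (Icc a b) := uniqueDiffOn_Icc hab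
  have E : ∀ k : ℕ, k ≤ n + 1 → ∀ y ∈ Icc a b,
      iteratedDerivWithin k f (Icc a b) y = iteratedDerivWithin k f s y := by
    intro k hk y hy
    refine iterDW_subset hf hIcc huI hs ?_ hy
    calc (k : ℕ∞) ≤ ((n + 1 : ℕ) : ℕ∞) := by exact_mod_cast hk
      _ = (n : ℕ∞) + 1 := by push_cast; rfl
  have hfI : ContDiffOn ℝ ((n : ℕ∞) + 1) f (Icc a b) := hf.mono hIcc
  have hfn : ContDiffOn ℝ (n : ℕ∞) f (Icc a b) := hfI.of_le (by
    exact_mod_cast le_self_add)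
  have hd : DifferentiableOn ℝ (iteratedDerivWithin n f s) s :=
    hf.differentiableOn_iteratedDerivWithin (by exact_mod_cast Nat.lt_succ_self n) hs
  have hf' : DifferentiableOn ℝ (iteratedDerivWithin n f (Icc a b)) (Ioo a b) := by
    intro y hy
    have hyI : y ∈ Icc a b := Ioo_subset_Icc_self hy
    have := ((hd y (hIcc hyI)).mono (Ioo_subset_Icc_self.trans hIcc))
    exact this.congr (fun z hz => E n (Nat.le_succ n) z (Ioo_subset_Icc_self hz))
      (E n (Nat.le_succ n) y hyI)
  obtain ⟨x', hx', key⟩ := taylor_mean_remainder_lagrange hab.ne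
    (by rwa [uIcc_of_le hab.le]) (by rwa [uIcc_of_le hab.le, uIoo_of_le hab.le])
  rw [uIoo_of_le hab.le] at hx'
  rw [uIcc_of_le hab.le] at key
  refine ⟨x', hx', ?_⟩
  have hsum : taylorWithinEval f n (Icc a b) a b = ∑ k ∈ Finset.range (n + 1),
      ((k.factorial : ℝ))⁻¹ * (b - a) ^ k * iteratedDerivWithin k f s a := by
    rw [taylor_within_apply]
    refine Finset.sum_congr rfl fun k hk => ?_
    rw [E k (by have := Finset.mem_range.1 hk; omega) a (left_mem_Icc.2 hab.le)]
    simp only [smul_eq_mul]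
  rw [hsum] at key
  rw [E (n + 1) le_rfl x' (Ioo_subset_Icc_self hx')] at key
  linarith [key]

/-- iterated derivative of a reflected function. -/
lemma iterD_comp_const_sub (f : ℝ → ℝ) (c : ℝ) (n : ℕ) (y : ℝ) :
    iteratedDeriv n (fun z => f (c - z)) y = (-1) ^ n * iteratedDeriv n f (c - y) := by
  have h1 : (fun z => f (c - z)) = fun z => (fun w => f (c + w)) (-z) := by
    funext z; simp [sub_eq_add_neg]
  rw [h1, iteratedDeriv_comp_neg n (fun w => f (c + w)) y,
    iteratedDeriv_comp_const_add n f c]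
  simp [smul_eq_mul, sub_eq_add_neg]

/-- Two-sided Taylor–Lagrange on `Ioo 0 α`. -/
lemma taylor_lagrange_two_sided {f : ℝ → ℝ} {α : ℝ} {n : ℕ}
    (hf : ContDiffOn ℝ ((n : ℕ∞) + 1) f (Ioo 0 α)) {x Δ : ℝ}
    (hx : x ∈ Ioo 0 α) (hxΔ : x + Δ ∈ Ioo 0 α) (hΔ : Δ ≠ 0) :
    ∃ x' ∈ Ioo 0 α, |x' - x| ≤ |Δ| ∧ f (x + Δ) = (∑ k ∈ Finset.range (n + 1),
        ((k.factorial : ℝ))⁻¹ * Δ ^ k * iteratedDerivWithin k f (Ioo 0 α) x) +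
      iteratedDerivWithin (n + 1) f (Ioo 0 α) x' * Δ ^ (n + 1) / (n + 1).factorial := by
  have hs : UniqueDiffOn ℝ (Ioo 0 α) := uniqueDiffOn_Ioo _ _
  rcases lt_or_gt_of_ne hΔ with hneg | hpos
  · -- Δ < 0 : reflect around c = 2x + Δ
    set c : ℝ := 2 * x + Δ with hc
    set s' : Set ℝ := Ioo (c - α) c with hs'
    have hos' : IsOpen s' := isOpen_Ioo
    have hmem : ∀ y : ℝ, y ∈ s' ↔ c - y ∈ Ioo 0 α := by
      intro y; simp only [hs', mem_Ioo]; constructor <;> intro h <;> constructor <;> linarith [h.1, h.2]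
    have hft : ContDiffOn ℝ ((n : ℕ∞) + 1) (fun z => f (c - z)) s' := by
      refine ContDiffOn.comp hf ((contDiff_const.sub contDiff_id).contDiffOn) ?_
      intro y hy; exact (hmem y).1 hy
    have hIcc : Icc (x + Δ) x ⊆ Ioo 0 α := fun y hy =>
      ⟨lt_of_lt_of_le hxΔ.1 hy.1, lt_of_le_of_lt hy.2 hx.2⟩
    have hIcc' : Icc (x + Δ) x ⊆ s' := by
      intro y hy
      rw [hmem]
      refine hIcc ⟨?_, ?_⟩ <;> simp only [hc] <;> [linarith [hy.2]; linarith [hy.1]]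
    have hab : x + Δ < x := by linarith
    obtain ⟨y', hy', key⟩ := taylor_lagrange_set (f := fun z => f (c - z)) (n := n)
      hab (uniqueDiffOn_Ioo _ _) hIcc' hft
    have hy'I : y' ∈ Icc (x + Δ) x := Ioo_subset_Icc_self hy'
    refine ⟨c - y', hIcc ⟨?_, ?_⟩, ?_, ?_⟩
    · have := hy'.2; simp only [hc]; linarith
    · have := hy'.1; simp only [hc]; linarith
    · have h1 := hy'.1; have h2 := hy'.2
      rw [abs_of_neg hneg, abs_le]
      constructor <;> simp only [hc] <;> linarith
    · -- convert derivatives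
      have conv : ∀ m : ℕ, ∀ y ∈ Icc (x + Δ) x,
          iteratedDerivWithin m (fun z => f (c - z)) s' y
            = (-1) ^ m * iteratedDerivWithin m f (Ioo 0 α) (c - y) := by
        intro m y hy
        rw [iterDW_isOpen hos' m (hIcc' hy), iterD_comp_const_sub,
          ← iterDW_isOpen isOpen_Ioo m (by rw [← hmem]; exact hIcc' hy)]
      have hcx : c - (x + Δ) = x := by simp only [hc]; ring
      have key2 : f (x + Δ) = (∑ k ∈ Finset.range (n + 1),
          ((k.factorial : ℝ))⁻¹ * (x - (x + Δ)) ^ k *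
            ((-1) ^ k * iteratedDerivWithin k f (Ioo 0 α) x)) +
          (-1) ^ (n + 1) * iteratedDerivWithin (n + 1) f (Ioo 0 α) (c - y')
            * (x - (x + Δ)) ^ (n + 1) / (n + 1).factorial := by
        have e0 : c - x = x + Δ := by simp only [hc]; ring
        nth_rewrite 1 [← e0]
        rw [key]
        congr 1
        · refine Finset.sum_congr rfl fun k hk => ?_
          rw [conv k (x + Δ) (left_mem_Icc.2 hab.le), hcx]
        · rw [conv (n + 1) y' hy'I]
      rw [key2]
      congr 1
      · refine Finset.sum_congr rfl fun k hk => ?_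
        have hx1 : (x - (x + Δ)) = -Δ := by ring
        rw [hx1, neg_pow]
        have h1 : ((-1 : ℝ)) ^ k * (-1) ^ k = 1 := by
          rw [← mul_pow]; norm_num
        linear_combination ((k.factorial : ℝ))⁻¹ * Δ ^ k
          * iteratedDerivWithin k f (Ioo 0 α) x * h1
      · have hx1 : (x - (x + Δ)) = -Δ := by ring
        rw [hx1, neg_pow]
        have h1 : ((-1 : ℝ)) ^ (n + 1) * (-1) ^ (n + 1) = 1 := by
          rw [← mul_pow]; norm_num
        field_simp
        linear_combination iteratedDerivWithin (n + 1) f (Ioo 0 α) (c - y')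
          * Δ ^ (n + 1) * h1
  · -- Δ > 0
    have hIcc : Icc x (x + Δ) ⊆ Ioo 0 α := fun y hy =>
      ⟨lt_of_lt_of_le hx.1 hy.1, lt_of_le_of_lt hy.2 hxΔ.2⟩
    have hab : x < x + Δ := by linarith
    obtain ⟨x', hx', key⟩ := taylor_lagrange_set hab hs hIcc hf
    refine ⟨x', hIcc (Ioo_subset_Icc_self hx'), ?_, ?_⟩
    · rw [abs_of_pos hpos, abs_le]; constructor <;> [linarith [hx'.1]; linarith [hx'.2]]
    · simpa using key

/-- Taylor-remainder chaining step: if two `(γ+1)`-times differentiable functions with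
Lipschitz top derivatives are `δ_k = (δ/5)^{1-k/(γ+2)}`-close in all derivatives of order
`k ≤ γ+1` at `x`, then they are `δ`-close at any `x + Δ` with
`|Δ| ≤ (1/2)(δ/5)^{1/(γ+2)}`. -/
theorem taylor_chaining_step
    (γ : ℕ) (α δ x Δ : ℝ) (h g : ℝ → ℝ)
    (hα : 0 < α) (hδ : 0 < δ)
    (hh : ContDiffOn ℝ ((γ : ℕ∞) + 1) h (Ioo 0 α))
    (hg : ContDiffOn ℝ ((γ : ℕ∞) + 1) g (Ioo 0 α))
    (hhlip : ∀ u ∈ Ioo 0 α, ∀ v ∈ Ioo 0 α,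
      |iteratedDerivWithin (γ + 1) h (Ioo 0 α) u -
        iteratedDerivWithin (γ + 1) h (Ioo 0 α) v| ≤
      (γ + 1).factorial * 2 ^ (γ + 1) * |u - v|)
    (hglip : ∀ u ∈ Ioo 0 α, ∀ v ∈ Ioo 0 α,
      |iteratedDerivWithin (γ + 1) g (Ioo 0 α) u -
        iteratedDerivWithin (γ + 1) g (Ioo 0 α) v| ≤
      (γ + 1).factorial * 2 ^ (γ + 1) * |u - v|)
    (hx : x ∈ Ioo 0 α)
    (hclose : ∀ k ≤ γ + 1,
      |iteratedDerivWithin k h (Ioo 0 α) x - iteratedDerivWithin k g (Ioo 0 α) x| ≤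
        (δ / 5) ^ (1 - (k : ℝ) / ((γ : ℝ) + 2)))
    (hΔ : |Δ| ≤ (1 / 2) * (δ / 5) ^ ((1 : ℝ) / ((γ : ℝ) + 2)))
    (hxΔ : x + Δ ∈ Ioo 0 α) :
    |h (x + Δ) - g (x + Δ)| ≤ δ := by
  set S : Set ℝ := Ioo 0 α with hS
  have hSu : UniqueDiffOn ℝ S := uniqueDiffOn_Ioo _ _
  set A : ℝ := δ / 5 with hA
  have hA0 : 0 < A := by positivity
  set t : ℝ := A ^ ((1 : ℝ) / ((γ : ℝ) + 2)) with ht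
  have ht0 : 0 < t := Real.rpow_pos_of_pos hA0 _
  have hγ2 : ((γ : ℝ) + 2) ≠ 0 := by positivity
  -- `t ^ k` equals `A ^ (k/(γ+2))` as rpow
  have htk : ∀ k : ℕ, t ^ k = A ^ ((k : ℝ) / ((γ : ℝ) + 2)) := by
    intro k
    rw [ht, ← Real.rpow_natCast (A ^ ((1 : ℝ) / ((γ : ℝ) + 2))) k, ← Real.rpow_mul hA0.le]
    congr 1
    field_simp
  have hδk : ∀ k : ℕ, A ^ (1 - (k : ℝ) / ((γ : ℝ) + 2)) = A / t ^ k := by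
    intro k
    rw [htk k, eq_div_iff (by positivity), ← Real.rpow_add hA0]
    norm_num
  have htpow : t ^ (γ + 2) = A := by
    rw [htk (γ + 2)]
    rw [show ((γ + 2 : ℕ) : ℝ) / ((γ : ℝ) + 2) = 1 by push_cast; field_simp]
    exact Real.rpow_one A
  -- the difference function
  set f : ℝ → ℝ := h - g with hf_def
  have hf : ContDiffOn ℝ ((γ : ℕ∞) + 1) f S := hh.sub hg
  have Dsplit : ∀ k, k ≤ γ + 1 → ∀ y ∈ S,
      iteratedDerivWithin k f S y =
        iteratedDerivWithin k h S y - iteratedDerivWithin k g S y := by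
    intro k hk y hy
    exact iteratedDerivWithin_sub hy hSu
      ((hh y hy).of_le (by exact_mod_cast hk)) ((hg y hy).of_le (by exact_mod_cast hk))
  have hDf : ∀ k, k ≤ γ + 1 → |iteratedDerivWithin k f S x| ≤ A / t ^ k := by
    intro k hk
    rw [Dsplit k hk x hx, ← hδk k]
    exact hclose k hk
  -- the case Δ = 0
  by_cases hΔ0 : Δ = 0
  · subst hΔ0
    rw [add_zero]
    have h0 := hclose 0 (by omega)
    simp only [iteratedDerivWithin_zero, Nat.cast_zero, zero_div, sub_zero,
      Real.rpow_one] at h0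
    linarith
  -- apply the two-sided Taylor–Lagrange theorem
  obtain ⟨x', hx'S, hx'd, hexp⟩ := taylor_lagrange_two_sided (n := γ) hf hx hxΔ hΔ0
  have htΔ : |Δ| ≤ t / 2 := by linarith
  have habs : ∀ k : ℕ, |Δ| ^ k ≤ t ^ k / 2 ^ k := by
    intro k
    calc |Δ| ^ k ≤ (t / 2) ^ k := pow_le_pow_left₀ (abs_nonneg _) htΔ k
      _ = t ^ k / 2 ^ k := div_pow t 2 k
  -- bound each Taylor coefficient term
  have hterm : ∀ k ∈ Finset.range (γ + 1),
      |((k.factorial : ℝ))⁻¹ * Δ ^ k * iteratedDerivWithin k f S x| ≤ A * (1 / 2) ^ k := by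
    intro k hk
    have hk' : k ≤ γ + 1 := by have := Finset.mem_range.1 hk; omega
    have hfac : ((k.factorial : ℝ))⁻¹ ≤ 1 := by
      rw [inv_le_one_iff₀]
      right
      exact_mod_cast k.factorial_pos
    rw [abs_mul, abs_mul, abs_pow, abs_inv, Nat.abs_cast]
    calc ((k.factorial : ℝ))⁻¹ * |Δ| ^ k * |iteratedDerivWithin k f S x|
        ≤ 1 * (t ^ k / 2 ^ k) * (A / t ^ k) := by
          have h1 := habs k
          have h2 := hDf k hk'
          gcongr <;> first | positivity | assumption
      _ = A * (1 / 2) ^ k := by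
          rw [one_mul, one_div, inv_pow]
          field_simp
  -- bound the Taylor polynomial part
  have hsum : |∑ k ∈ Finset.range (γ + 1),
      ((k.factorial : ℝ))⁻¹ * Δ ^ k * iteratedDerivWithin k f S x| ≤ 2 * A := by
    calc |∑ k ∈ Finset.range (γ + 1), ((k.factorial : ℝ))⁻¹ * Δ ^ k *
          iteratedDerivWithin k f S x|
        ≤ ∑ k ∈ Finset.range (γ + 1),
          |((k.factorial : ℝ))⁻¹ * Δ ^ k * iteratedDerivWithin k f S x| :=
          Finset.abs_sum_le_sum_abs _ _
      _ ≤ ∑ k ∈ Finset.range (γ + 1), A * (1 / 2) ^ k := Finset.sum_le_sum hterm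
      _ = A * ∑ k ∈ Finset.range (γ + 1), (1 / 2 : ℝ) ^ k := by rw [Finset.mul_sum]
      _ ≤ A * 2 := by
          have := sum_geometric_two_le (γ + 1)
          nlinarith
      _ = 2 * A := by ring
  -- bound the derivative at x'
  set L : ℝ := (γ + 1).factorial * 2 ^ (γ + 1) with hL
  have hD' : |iteratedDerivWithin (γ + 1) f S x'| ≤ A / t ^ (γ + 1) + 2 * L * |Δ| := by
    rw [Dsplit (γ + 1) le_rfl x' hx'S]
    have e1 := hhlip x' hx'S x hx
    have e2 := hglip x hx x' hx'S
    have e3 := hclose (γ + 1) le_rfl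
    rw [hδk (γ + 1)] at e3
    have exx : |x - x'| ≤ |Δ| := by rwa [abs_sub_comm]
    have exx' : |x' - x| ≤ |Δ| := hx'd
    have key : |iteratedDerivWithin (γ + 1) h S x' - iteratedDerivWithin (γ + 1) g S x'|
        ≤ |iteratedDerivWithin (γ + 1) h S x' - iteratedDerivWithin (γ + 1) h S x|
          + |iteratedDerivWithin (γ + 1) h S x - iteratedDerivWithin (γ + 1) g S x|
          + |iteratedDerivWithin (γ + 1) g S x - iteratedDerivWithin (γ + 1) g S x'| := by
      calc |iteratedDerivWithin (γ + 1) h S x' - iteratedDerivWithin (γ + 1) g S x'|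
          = |(iteratedDerivWithin (γ + 1) h S x' - iteratedDerivWithin (γ + 1) h S x)
            + (iteratedDerivWithin (γ + 1) h S x - iteratedDerivWithin (γ + 1) g S x)
            + (iteratedDerivWithin (γ + 1) g S x - iteratedDerivWithin (γ + 1) g S x')| := by
            congr 1
            ring
        _ ≤ _ := by
            exact (abs_add_le _ _).trans (by gcongr; exact abs_add_le _ _)
    have hL0 : (0 : ℝ) ≤ L := by positivity
    calc |iteratedDerivWithin (γ + 1) h S x' - iteratedDerivWithin (γ + 1) g S x'|
        ≤ L * |x' - x| + A / t ^ (γ + 1) + L * |x - x'| := by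
          refine key.trans ?_
          gcongr <;> assumption
      _ ≤ A / t ^ (γ + 1) + 2 * L * |Δ| := by nlinarith
  -- bound the remainder term
  have hrem : |iteratedDerivWithin (γ + 1) f S x' * Δ ^ (γ + 1) / (γ + 1).factorial|
      ≤ 2 * A := by
    have hF1 : (1 : ℝ) ≤ ((γ + 1).factorial : ℝ) := by exact_mod_cast (γ + 1).factorial_pos
    have hF0 : (0 : ℝ) < ((γ + 1).factorial : ℝ) := by positivity
    rw [abs_div, abs_mul, abs_pow, Nat.abs_cast]
    calc |iteratedDerivWithin (γ + 1) f S x'| * |Δ| ^ (γ + 1) / ((γ + 1).factorial : ℝ)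
        ≤ (A / t ^ (γ + 1) + 2 * L * |Δ|) * |Δ| ^ (γ + 1) / ((γ + 1).factorial : ℝ) := by
          gcongr
      _ = A / t ^ (γ + 1) * |Δ| ^ (γ + 1) / ((γ + 1).factorial : ℝ)
          + 2 * 2 ^ (γ + 1) * (|Δ| * |Δ| ^ (γ + 1)) := by
          rw [hL]; field_simp
      _ ≤ A / t ^ (γ + 1) * (t ^ (γ + 1) / 2 ^ (γ + 1)) / 1
          + 2 * 2 ^ (γ + 1) * (t / 2 * (t ^ (γ + 1) / 2 ^ (γ + 1))) := by
          gcongr <;> first | exact habs (γ + 1) | exact htΔ | exact hF1 | positivity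
      _ ≤ A + A := by
          have e1 : A / t ^ (γ + 1) * (t ^ (γ + 1) / 2 ^ (γ + 1)) / 1 = A / 2 ^ (γ + 1) := by
            field_simp
          have e2 : 2 * 2 ^ (γ + 1) * (t / 2 * (t ^ (γ + 1) / 2 ^ (γ + 1))) = t ^ (γ + 2) := by
            field_simp
            ring
          rw [e1, e2, htpow]
          have h2p : (1 : ℝ) ≤ 2 ^ (γ + 1) := one_le_pow₀ (by norm_num)
          have := div_le_self hA0.le h2p
          linarith
      _ = 2 * A := by ring
  calc |h (x + Δ) - g (x + Δ)| = |f (x + Δ)| := rfl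
    _ ≤ 2 * A + 2 * A := by
        rw [hexp]
        exact (abs_add_le _ _).trans (add_le_add hsum hrem)
    _ ≤ δ := by rw [hA]; linarith
end
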